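/- arXiv:1612.03246 — 14 statements merged into one kernel-verified Lean document; each statement's English description precedes it below -/
import Mathlib

section
/- Suppose m ≥ 1 and t_m ≥ 0. Then there exists a feasible collection of m paths V*_1, …, V*_m whose cost is at most the cost of every feasible collection of m paths, and which moreover satisfies: for every i, the leftmost viewpoint min V*_i equals b x for some target x ∈ X, and the rightmost viewpoint max V*_i either equals a y for some target y ∈ X or equals min V*_i. (Optimal paths may be assumed to start at right endpoints and end at left endpoints of target visibility intervals.) -/
noncomputable def gcost (tm : ℝ) (S : Finset ℝ) : ℝ :=
  WithBot.unbotD 0 S.max - WithTop.untopD 0 S.min + S.card * tm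

lemma gcost_eq (tm : ℝ) (S : Finset ℝ) (hS : S.Nonempty) :
    gcost tm S = S.max' hS - S.min' hS + S.card * tm := by
  unfold gcost
  rw [← Finset.coe_max' hS, ← Finset.coe_min' hS, WithBot.unbotD_coe, WithTop.untopD_coe]

/-- Inner lemma: a set of viewpoints all at right endpoints `b x` covering `Tset` can be
modified (without moving its min, without increasing its card) so that its max is either
equal to its min or is a left endpoint `a y` of a target in `Tset`. -/
lemma inner_lemma {X : Type*} [Fintype X] (a b : X → ℝ) (Tset : Finset X) :
    ∀ (n : ℕ) (S : Finset ℝ) (hS : S.Nonempty), S.card ≤ n →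
      (∀ v ∈ S, ∃ x, v = b x) →
      (∀ x ∈ Tset, ∃ v ∈ S, a x ≤ v ∧ v ≤ b x) →
      ∃ (T : Finset ℝ) (hT : T.Nonempty),
        (∀ v ∈ T, (∃ x, v = a x) ∨ (∃ x, v = b x)) ∧
        (∀ x ∈ Tset, ∃ v ∈ T, a x ≤ v ∧ v ≤ b x) ∧
        T.min' hT = S.min' hS ∧ T.card ≤ S.card ∧
        (T.max' hT = T.min' hT ∨ ∃ y ∈ Tset, T.max' hT = a y) := by
  intro n
  induction n with
  | zero =>
    intro S hS hcard _ _
    exact absurd (Finset.card_eq_zero.mp (Nat.le_zero.mp hcard)) hS.ne_empty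
  | succ n ih =>
    intro S hS hcard hb hstab
    by_cases h1 : S.card ≤ 1
    · refine ⟨S, hS, fun v hv => Or.inr (hb v hv), hstab, rfl, le_rfl, Or.inl ?_⟩
      exact Finset.card_le_one.mp h1 _ (S.max'_mem hS) _ (S.min'_mem hS)
    · push_neg at h1
      set M := S.max' hS with hM
      have hMS : M ∈ S := S.max'_mem hS
      set S' := S.erase M with hS'def
      have hcard' : S'.card = S.card - 1 := Finset.card_erase_of_mem hMS
      have hS'ne : S'.Nonempty := by rw [← Finset.card_pos, hcard']; omega
      have hminne : S.min' hS ≠ M := ne_of_lt (S.min'_lt_max'_of_card h1)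
      have hminmem : S.min' hS ∈ S' := Finset.mem_erase.mpr ⟨hminne, S.min'_mem hS⟩
      have hmin' : S'.min' hS'ne = S.min' hS :=
        le_antisymm (Finset.min'_le _ _ hminmem)
          (Finset.le_min' _ _ _ fun v hv => Finset.min'_le _ _ (Finset.mem_of_mem_erase hv))
      have hb' : ∀ v ∈ S', ∃ x, v = b x := fun v hv => hb v (Finset.mem_of_mem_erase hv)
      have hS'cardle : S'.card ≤ n := by omega
      have hS'sub : ∀ v ∈ S', v ∈ S := fun v hv => Finset.mem_of_mem_erase hv
      classical
      set U := Tset.filter (fun y => a y ≤ M ∧ M ≤ b y) with hUdef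
      by_cases hU : U.Nonempty
      · have hUa : (U.image a).Nonempty := hU.image a
        set α := (U.image a).max' hUa with hα
        obtain ⟨y₀, hy₀U, hy₀⟩ : ∃ y ∈ U, a y = α := by
          have := (U.image a).max'_mem hUa
          rw [Finset.mem_image] at this
          exact this
        have hy₀f := Finset.mem_filter.mp hy₀U
        have hαM : α ≤ M := hy₀ ▸ hy₀f.2.1
        set M₂ := S'.max' hS'ne with hM₂
        have hM₂M : M₂ ≤ M := Finset.le_max' _ _ (hS'sub _ (S'.max'_mem hS'ne))
        by_cases h2 : α ≤ M₂
        · -- drop M; targets formerly seen by M are seen by M₂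
          have hstab' : ∀ x ∈ Tset, ∃ v ∈ S', a x ≤ v ∧ v ≤ b x := by
            intro x hx
            obtain ⟨v, hvS, hav, hvb⟩ := hstab x hx
            by_cases hvM : v = M
            · have hxU : x ∈ U := Finset.mem_filter.mpr ⟨hx, hvM ▸ hav, hvM ▸ hvb⟩
              have hax : a x ≤ α := Finset.le_max' _ _ (Finset.mem_image_of_mem a hxU)
              exact ⟨M₂, S'.max'_mem hS'ne, le_trans hax h2,
                le_trans hM₂M (hvM ▸ hvb)⟩
            · exact ⟨v, Finset.mem_erase.mpr ⟨hvM, hvS⟩, hav, hvb⟩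
          obtain ⟨T, hT, e1, e2, e3, e4, e5⟩ := ih S' hS'ne hS'cardle hb' hstab'
          exact ⟨T, hT, e1, e2, by rw [e3, hmin'], by omega, e5⟩
        · push_neg at h2
          refine ⟨insert α S', Finset.insert_nonempty _ _, ?_, ?_, ?_, ?_, ?_⟩
          · intro v hv
            rcases Finset.mem_insert.mp hv with h | h
            · exact Or.inl ⟨y₀, h ▸ hy₀.symm⟩
            · exact Or.inr (hb' v h)
          · intro x hx
            obtain ⟨v, hvS, hav, hvb⟩ := hstab x hx
            by_cases hvM : v = M
            · have hxU : x ∈ U := Finset.mem_filter.mpr ⟨hx, hvM ▸ hav, hvM ▸ hvb⟩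
              have hax : a x ≤ α := Finset.le_max' _ _ (Finset.mem_image_of_mem a hxU)
              exact ⟨α, Finset.mem_insert_self _ _, hax, le_trans hαM (hvM ▸ hvb)⟩
            · exact ⟨v, Finset.mem_insert_of_mem (Finset.mem_erase.mpr ⟨hvM, hvS⟩), hav, hvb⟩
          · rw [Finset.min'_insert α S' hS'ne, hmin']
            have : S'.min' hS'ne ≤ M₂ := Finset.min'_le _ _ (S'.max'_mem hS'ne)
            rw [hmin'] at this
            exact min_eq_right (le_trans this (le_of_lt h2))
          · have := Finset.card_insert_le α S'
            omega
          · refine Or.inr ⟨y₀, hy₀f.1, ?_⟩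
            rw [Finset.max'_insert α S' hS'ne, ← hy₀]
            exact max_eq_left (by rw [hy₀]; exact le_of_lt h2)
      · -- U empty: no target is seen only by M
        rw [Finset.not_nonempty_iff_eq_empty] at hU
        have hstab' : ∀ x ∈ Tset, ∃ v ∈ S', a x ≤ v ∧ v ≤ b x := by
          intro x hx
          obtain ⟨v, hvS, hav, hvb⟩ := hstab x hx
          by_cases hvM : v = M
          · exfalso
            have hxU : x ∈ U := Finset.mem_filter.mpr ⟨hx, hvM ▸ hav, hvM ▸ hvb⟩
            simp [hU] at hxU
          · exact ⟨v, Finset.mem_erase.mpr ⟨hvM, hvS⟩, hav, hvb⟩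
        obtain ⟨T, hT, e1, e2, e3, e4, e5⟩ := ih S' hS'ne hS'cardle hb' hstab'
        exact ⟨T, hT, e1, e2, by rw [e3, hmin'], by omega, e5⟩

/-- Canonicalization of a single path: replace a nonempty path by one whose viewpoints are
endpoints of target intervals, seeing all targets the original saw, with no larger cost,
starting at a right endpoint and ending at a left endpoint (or being a single point). -/
lemma canon_lemma {X : Type*} [Fintype X] [Nonempty X] (a b : X → ℝ)
    (hab : ∀ x, a x ≤ b x) (tm : ℝ) (htm : 0 ≤ tm) (S : Finset ℝ) (hS : S.Nonempty) :
    ∃ (T : Finset ℝ) (hT : T.Nonempty),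
      (∀ v ∈ T, (∃ x, v = a x) ∨ (∃ x, v = b x)) ∧
      (∀ x : X, (∃ v ∈ S, a x ≤ v ∧ v ≤ b x) → ∃ v ∈ T, a x ≤ v ∧ v ≤ b x) ∧
      (T.max' hT - T.min' hT + T.card * tm ≤ S.max' hS - S.min' hS + S.card * tm) ∧
      (∃ x, T.min' hT = b x) ∧
      ((∃ y, T.max' hT = a y) ∨ T.max' hT = T.min' hT) := by
  classical
  have hminmax : S.min' hS ≤ S.max' hS := Finset.min'_le _ _ (S.max'_mem hS)
  have hScard : 1 ≤ S.card := Finset.card_pos.mpr hS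
  set Tset := Finset.univ.filter (fun x : X => ∃ v ∈ S, a x ≤ v ∧ v ≤ b x) with hTsetdef
  by_cases hT0 : Tset = ∅
  · -- no target is seen by S at all
    obtain ⟨x₀⟩ := (inferInstance : Nonempty X)
    refine ⟨{b x₀}, Finset.singleton_nonempty _, ?_, ?_, ?_, ⟨x₀, by simp⟩, Or.inr (by simp)⟩
    · intro v hv; exact Or.inr ⟨x₀, Finset.mem_singleton.mp hv⟩
    · intro x hx
      exfalso
      have : x ∈ Tset := Finset.mem_filter.mpr ⟨Finset.mem_univ x, hx⟩
      simp [hT0] at this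
    · simp only [Finset.max'_singleton, Finset.min'_singleton, Finset.card_singleton,
        Nat.cast_one, one_mul]
      have h1 : tm ≤ (S.card : ℝ) * tm := by
        have : (1 : ℝ) ≤ (S.card : ℝ) := by exact_mod_cast hScard
        nlinarith
      linarith
  · have hTsetne : Tset.Nonempty := Finset.nonempty_of_ne_empty hT0
    set stab : ℝ → Finset X := fun v => Finset.univ.filter (fun x => a x ≤ v ∧ v ≤ b x)
      with hstabdef
    set Bv : ℝ → ℝ := fun v => WithTop.untopD 0 ((stab v).image b).min with hBvdef
    set stabbers := S.filter (fun v => (stab v).Nonempty) with hstabbersdef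
    have hBv : ∀ v ∈ stabbers, v ≤ Bv v ∧ (∃ x, Bv v = b x) ∧
        (∀ x ∈ stab v, a x ≤ Bv v ∧ Bv v ≤ b x) := by
      intro v hv
      have hne : (stab v).Nonempty := (Finset.mem_filter.mp hv).2
      have hne' : ((stab v).image b).Nonempty := hne.image b
      have hBveq : Bv v = ((stab v).image b).min' hne' := by
        simp only [hBvdef]
        rw [← Finset.coe_min' hne', WithTop.untopD_coe]
      have hmem := ((stab v).image b).min'_mem hne'
      rw [Finset.mem_image] at hmem
      obtain ⟨z, hz, hzeq⟩ := hmem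
      have hzf := Finset.mem_filter.mp hz
      constructor
      · rw [hBveq, ← hzeq]; exact hzf.2.2
      refine ⟨⟨z, by rw [hBveq, ← hzeq]⟩, ?_⟩
      intro x hx
      have hxf := Finset.mem_filter.mp hx
      constructor
      · calc a x ≤ v := hxf.2.1
          _ ≤ Bv v := by rw [hBveq, ← hzeq]; exact hzf.2.2
      · rw [hBveq]
        exact Finset.min'_le _ _ (Finset.mem_image_of_mem b hx)
    set S₁ := stabbers.image Bv with hS₁def
    have hS₁ne : S₁.Nonempty := by
      obtain ⟨x, hx⟩ := hTsetne
      obtain ⟨v, hvS, hav, hvb⟩ := (Finset.mem_filter.mp hx).2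
      have : v ∈ stabbers := Finset.mem_filter.mpr
        ⟨hvS, ⟨x, Finset.mem_filter.mpr ⟨Finset.mem_univ x, hav, hvb⟩⟩⟩
      exact ⟨Bv v, Finset.mem_image_of_mem Bv this⟩
    have hS₁b : ∀ w ∈ S₁, ∃ x, w = b x := by
      intro w hw
      obtain ⟨v, hv, hveq⟩ := Finset.mem_image.mp hw
      obtain ⟨_, ⟨x, hx⟩, _⟩ := hBv v hv
      exact ⟨x, hveq ▸ hx⟩
    have hS₁stab : ∀ x ∈ Tset, ∃ w ∈ S₁, a x ≤ w ∧ w ≤ b x := by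
      intro x hx
      obtain ⟨v, hvS, hav, hvb⟩ := (Finset.mem_filter.mp hx).2
      have hxstab : x ∈ stab v := Finset.mem_filter.mpr ⟨Finset.mem_univ x, hav, hvb⟩
      have hvst : v ∈ stabbers := Finset.mem_filter.mpr ⟨hvS, ⟨x, hxstab⟩⟩
      obtain ⟨_, _, h3⟩ := hBv v hvst
      exact ⟨Bv v, Finset.mem_image_of_mem Bv hvst, (h3 x hxstab).1, (h3 x hxstab).2⟩
    have hS₁min : S.min' hS ≤ S₁.min' hS₁ne := by
      apply Finset.le_min'
      intro w hw
      obtain ⟨v, hv, hveq⟩ := Finset.mem_image.mp hw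
      have h1 := (hBv v hv).1
      have h2 : v ∈ S := (Finset.mem_filter.mp hv).1
      calc S.min' hS ≤ v := Finset.min'_le _ _ h2
        _ ≤ Bv v := h1
        _ = w := hveq
    have hS₁card : S₁.card ≤ S.card :=
      le_trans (Finset.card_image_le) (Finset.card_filter_le _ _)
    obtain ⟨T, hT, e1, e2, e3, e4, e5⟩ :=
      inner_lemma a b Tset S₁.card S₁ hS₁ne le_rfl hS₁b hS₁stab
    have hTminb : ∃ x, T.min' hT = b x := by
      rw [e3]; exact hS₁b _ (S₁.min'_mem hS₁ne)
    have hTmin : S.min' hS ≤ T.min' hT := by rw [e3]; exact hS₁min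
    have hTcard : T.card ≤ S.card := le_trans e4 hS₁card
    have hTcardR : (T.card : ℝ) * tm ≤ (S.card : ℝ) * tm := by
      apply mul_le_mul_of_nonneg_right _ htm
      exact_mod_cast hTcard
    have hTminmax : T.min' hT ≤ T.max' hT := Finset.min'_le _ _ (T.max'_mem hT)
    refine ⟨T, hT, e1, ?_, ?_, hTminb, ?_⟩
    · intro x hx
      exact e2 x (Finset.mem_filter.mpr ⟨Finset.mem_univ x, hx⟩)
    · rcases e5 with h | ⟨y, hy, hyeq⟩
      · rw [h]; simp only [sub_self]
        linarith
      · -- max' T = a y, with y seen by S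
        obtain ⟨v, hvS, hav, _⟩ := (Finset.mem_filter.mp hy).2
        have : T.max' hT ≤ S.max' hS := by
          rw [hyeq]
          exact le_trans hav (Finset.le_max' _ _ hvS)
        linarith
    · rcases e5 with h | ⟨y, _, hyeq⟩
      · exact Or.inr h
      · exact Or.inl ⟨y, hyeq⟩

/-- Interval model of visibility along a chain-visible curve: each target `x` has a
nonempty closed interval `[a x, b x]`.  A path is a finite nonempty set of reals with
cost `(max - min) + card * tm`; a collection of `m` paths is feasible if every target is
seen from some viewpoint of some path, and its cost is the maximum of the path costs.
There exists an optimal feasible collection whose paths start at right endpoints `b x`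
and end at left endpoints `a y` of target visibility intervals (or are single points). -/
theorem stmt0 {X : Type*} [Fintype X] [Nonempty X] (a b : X → ℝ)
    (hab : ∀ x, a x ≤ b x) (m : ℕ) (hm : 1 ≤ m) (tm : ℝ) (htm : 0 ≤ tm) :
    ∃ (V : Fin m → Finset ℝ) (hV : ∀ i, (V i).Nonempty),
      (∀ x : X, ∃ i, ∃ v ∈ V i, a x ≤ v ∧ v ≤ b x) ∧
      (∀ (W : Fin m → Finset ℝ) (hW : ∀ i, (W i).Nonempty),
        (∀ x : X, ∃ i, ∃ v ∈ W i, a x ≤ v ∧ v ≤ b x) →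
          (⨆ i, ((V i).max' (hV i) - (V i).min' (hV i) + (V i).card * tm)) ≤
            ⨆ i, ((W i).max' (hW i) - (W i).min' (hW i) + (W i).card * tm)) ∧
      (∀ i, (∃ x : X, (V i).min' (hV i) = b x) ∧
        ((∃ y : X, (V i).max' (hV i) = a y) ∨ (V i).max' (hV i) = (V i).min' (hV i))) := by
  classical
  have hFin : Nonempty (Fin m) := ⟨⟨0, hm⟩⟩
  set E : Finset ℝ := (Finset.univ.image a) ∪ (Finset.univ.image b) with hE
  have hmemE : ∀ v : ℝ, ((∃ x, v = a x) ∨ (∃ x, v = b x)) → v ∈ E := by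
    intro v hv
    rcases hv with ⟨x, hx⟩ | ⟨x, hx⟩
    · exact Finset.mem_union_left _ (Finset.mem_image.mpr ⟨x, Finset.mem_univ x, hx.symm⟩)
    · exact Finset.mem_union_right _ (Finset.mem_image.mpr ⟨x, Finset.mem_univ x, hx.symm⟩)
  set 𝒞 : Finset (Fin m → Finset ℝ) :=
    (Fintype.piFinset fun _ : Fin m => E.powerset.filter Finset.Nonempty).filter
      (fun V => ∀ x : X, ∃ i, ∃ v ∈ V i, a x ≤ v ∧ v ≤ b x) with h𝒞
  have hmem𝒞 : ∀ V : Fin m → Finset ℝ,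
      (∀ i, V i ⊆ E) → (∀ i, (V i).Nonempty) →
      (∀ x : X, ∃ i, ∃ v ∈ V i, a x ≤ v ∧ v ≤ b x) → V ∈ 𝒞 := by
    intro V hsub hne hfeas
    refine Finset.mem_filter.mpr ⟨?_, hfeas⟩
    rw [Fintype.mem_piFinset]
    intro i
    exact Finset.mem_filter.mpr ⟨Finset.mem_powerset.mpr (hsub i), hne i⟩
  have h𝒞ne : 𝒞.Nonempty := by
    refine ⟨fun _ => Finset.univ.image b, hmem𝒞 _ (fun i => ?_) (fun i => ?_) (fun x => ?_)⟩
    · exact Finset.subset_union_right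
    · exact Finset.univ_nonempty.image b
    · exact ⟨⟨0, hm⟩, b x, Finset.mem_image_of_mem b (Finset.mem_univ x), hab x, le_rfl⟩
  obtain ⟨Vm, hVm𝒞, hVmmin⟩ := Finset.exists_min_image 𝒞 (fun V => ⨆ i, gcost tm (V i)) h𝒞ne
  have hVmf := Finset.mem_filter.mp hVm𝒞
  have hVmfeas : ∀ x : X, ∃ i, ∃ v ∈ Vm i, a x ≤ v ∧ v ≤ b x := hVmf.2
  have hVmne : ∀ i, (Vm i).Nonempty := by
    intro i
    have := (Fintype.mem_piFinset.mp hVmf.1) i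
    exact (Finset.mem_filter.mp this).2
  choose T hT hTE hTstab hTcost hTminb hTstruct using
    fun i => canon_lemma a b hab tm htm (Vm i) (hVmne i)
  have hgT : ∀ i, gcost tm (T i) ≤ gcost tm (Vm i) := by
    intro i
    rw [gcost_eq tm (T i) (hT i), gcost_eq tm (Vm i) (hVmne i)]
    exact hTcost i
  refine ⟨T, hT, ?_, ?_, fun i => ⟨hTminb i, hTstruct i⟩⟩
  · intro x
    obtain ⟨i, v, hv, h⟩ := hVmfeas x
    obtain ⟨w, hw, h1, h2⟩ := hTstab i x ⟨v, hv, h⟩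
    exact ⟨i, w, hw, h1, h2⟩
  · intro W hW hWfeas
    choose T' hT' hTE' hTstab' hTcost' _ _ using
      fun i => canon_lemma a b hab tm htm (W i) (hW i)
    have hT'mem : T' ∈ 𝒞 := by
      refine hmem𝒞 T' (fun i v hv => hmemE v (hTE' i v hv)) hT' (fun x => ?_)
      obtain ⟨i, v, hv, h⟩ := hWfeas x
      obtain ⟨w, hw, h1, h2⟩ := hTstab' i x ⟨v, hv, h⟩
      exact ⟨i, w, hw, h1, h2⟩
    have hbdd : ∀ f : Fin m → ℝ, BddAbove (Set.range f) :=
      fun f => (Set.finite_range f).bddAbove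
    have step1 : (⨆ i, ((T i).max' (hT i) - (T i).min' (hT i) + (T i).card * tm))
        = ⨆ i, gcost tm (T i) :=
      iSup_congr fun i => (gcost_eq tm (T i) (hT i)).symm
    have step4 : (⨆ i, gcost tm (W i))
        = ⨆ i, ((W i).max' (hW i) - (W i).min' (hW i) + (W i).card * tm) :=
      iSup_congr fun i => gcost_eq tm (W i) (hW i)
    rw [step1, ← step4]
    calc (⨆ i, gcost tm (T i)) ≤ ⨆ i, gcost tm (Vm i) := ciSup_mono (hbdd _) hgT
      _ ≤ ⨆ i, gcost tm (T' i) := hVmmin T' hT'mem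
      _ ≤ ⨆ i, gcost tm (W i) := by
          apply ciSup_mono (hbdd _)
          intro i
          rw [gcost_eq tm (T' i) (hT' i), gcost_eq tm (W i) (hW i)]
          exact hTcost' i
end

section
/- Suppose m ≥ 1 and t_m ≥ 0. Then there exists a feasible collection of m paths whose cost is at most the cost of every feasible collection of m paths and all of whose viewpoints belong to the finite set {a x : x ∈ X} ∪ {b x : x ∈ X}. (Hence the multi-robot watchman problem restricted to a chain-visible curve reduces to a finite search over candidate viewpoints and is exactly solvable.) -/
private lemma sSup_coe_finset (s : Finset ℝ) (h : s.Nonempty) :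
    sSup (s : Set ℝ) = s.max' h :=
  le_antisymm (csSup_le (Finset.coe_nonempty.mpr h) fun x hx => s.le_max' x hx)
    (le_csSup s.finite_toSet.bddAbove (s.max'_mem h))

private lemma sInf_coe_finset (s : Finset ℝ) (h : s.Nonempty) :
    sInf (s : Set ℝ) = s.min' h :=
  le_antisymm (csInf_le s.finite_toSet.bddBelow (s.min'_mem h))
    (le_csInf (Finset.coe_nonempty.mpr h) fun x hx => s.min'_le x hx)

private lemma round_path {X : Type*} [Fintype X] [Nonempty X] (a b : X → ℝ)
    (s : Finset ℝ) (hs : s.Nonempty) :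
    ∃ (s' : Finset ℝ) (h' : s'.Nonempty),
      (∀ v ∈ s', (∃ x, v = a x) ∨ (∃ x, v = b x)) ∧
      (∀ x, (∃ v ∈ s, a x ≤ v ∧ v ≤ b x) → ∃ v ∈ s', a x ≤ v ∧ v ≤ b x) ∧
      s'.card ≤ s.card ∧
      s'.max' h' - s'.min' h' ≤ s.max' hs - s.min' hs := by
  classical
  set L := s.min' hs with hL
  set R := s.max' hs with hR
  have hLR : L ≤ R := s.min'_le _ (s.max'_mem hs)
  have hcard1 : 1 ≤ s.card := hs.card_pos
  -- helper: sets all inside [L,R] have small span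
  have span_le : ∀ (t : Finset ℝ) (ht : t.Nonempty),
      (∀ v ∈ t, L ≤ v ∧ v ≤ R) → t.max' ht - t.min' ht ≤ R - L := by
    intro t ht hmem
    have h1 : t.max' ht ≤ R := Finset.max'_le t ht R fun v hv => (hmem v hv).2
    have h2 : L ≤ t.min' ht := Finset.le_min' t ht L fun v hv => (hmem v hv).1
    linarith
  have single_span : ∀ (r : ℝ), ({r} : Finset ℝ).max' (Finset.singleton_nonempty r) -
      ({r} : Finset ℝ).min' (Finset.singleton_nonempty r) ≤ R - L := by
    intro r
    simp only [Finset.max'_singleton, Finset.min'_singleton, sub_self]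
    linarith
  by_cases hcov : ∃ x, ∃ v ∈ s, a x ≤ v ∧ v ≤ b x
  swap
  · -- no target is covered at all
    obtain ⟨x₀⟩ := (inferInstance : Nonempty X)
    refine ⟨{a x₀}, Finset.singleton_nonempty _, ?_, ?_, ?_, single_span _⟩
    · intro v hv; rw [Finset.mem_singleton] at hv; exact Or.inl ⟨x₀, hv⟩
    · intro x hx
      obtain ⟨v, hv, h1, h2⟩ := hx
      exact (hcov ⟨x, v, hv, h1, h2⟩).elim
    · simpa using hcard1
  · -- main case
    set N : Finset ℝ := s.filter (fun v => ∃ x, a x ≤ v ∧ v ≤ b x ∧ b x ≤ R) with hN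
    set p : ℝ → ℝ := fun v => sInf (b '' {x | a x ≤ v ∧ v ≤ b x}) with hp
    have hpv : ∀ v, (∃ x, a x ≤ v ∧ v ≤ b x) →
        (∃ x₀, a x₀ ≤ v ∧ v ≤ b x₀ ∧ p v = b x₀) ∧
        (∀ y, a y ≤ v → v ≤ b y → p v ≤ b y) := by
      intro v ⟨x, hx1, hx2⟩
      have hfin : (b '' {x | a x ≤ v ∧ v ≤ b x}).Finite := Set.Finite.image b (Set.toFinite _)
      have hne : (b '' {x | a x ≤ v ∧ v ≤ b x}).Nonempty := ⟨b x, x, ⟨hx1, hx2⟩, rfl⟩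
      constructor
      · obtain ⟨x₀, hx₀, heq⟩ := hne.csInf_mem hfin
        exact ⟨x₀, hx₀.1, hx₀.2, heq.symm⟩
      · intro y h1 h2
        exact csInf_le hfin.bddBelow ⟨y, ⟨h1, h2⟩, rfl⟩
    -- properties of p on N
    have hpN : ∀ v ∈ N, (∃ x₀, p v = b x₀) ∧ L ≤ v ∧ v ≤ p v ∧ p v ≤ R ∧
        (∀ y, a y ≤ v → v ≤ b y → p v ≤ b y) := by
      intro v hv
      rw [hN, Finset.mem_filter] at hv
      obtain ⟨hvs, x, hx1, hx2, hx3⟩ := hv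
      obtain ⟨⟨x₀, _, h2, h3⟩, hle⟩ := hpv v ⟨x, hx1, hx2⟩
      exact ⟨⟨x₀, h3⟩, s.min'_le v hvs, h3 ▸ h2, (hle x hx1 hx2).trans hx3, hle⟩
    -- image points are endpoints, cover their targets, lie in [L,R]
    have himg_range : ∀ w ∈ N.image p, L ≤ w ∧ w ≤ R := by
      intro w hw
      obtain ⟨v, hv, rfl⟩ := Finset.mem_image.mp hw
      obtain ⟨_, h1, h2, h3, _⟩ := hpN v hv
      exact ⟨h1.trans h2, h3⟩
    have himg_end : ∀ w ∈ N.image p, (∃ x, w = a x) ∨ (∃ x, w = b x) := by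
      intro w hw
      obtain ⟨v, hv, rfl⟩ := Finset.mem_image.mp hw
      obtain ⟨⟨x₀, h⟩, _⟩ := hpN v hv
      exact Or.inr ⟨x₀, h⟩
    have himg_cov : ∀ x, ∀ v ∈ N, a x ≤ v → v ≤ b x → ∃ w ∈ N.image p, a x ≤ w ∧ w ≤ b x := by
      intro x v hv h1 h2
      obtain ⟨_, _, hvp, _, hle⟩ := hpN v hv
      exact ⟨p v, Finset.mem_image_of_mem p hv, h1.trans hvp, hle x h1 h2⟩
    -- Far targets
    set Far : X → Prop := fun x => ∃ v ∈ s, (a x ≤ v ∧ v ≤ b x) ∧ v ∉ N with hFar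
    have hfarb : ∀ x, Far x → a x ≤ R ∧ R < b x := by
      intro x ⟨v, hvs, ⟨h1, h2⟩, hvN⟩
      have hvR : v ≤ R := s.le_max' v hvs
      rw [hN, Finset.mem_filter] at hvN
      push_neg at hvN
      exact ⟨h1.trans hvR, hvN hvs x h1 h2⟩
    by_cases hfar : ∃ x, Far x
    · -- far targets exist
      set Q : Set ℝ := a '' {x | Far x} with hQ
      have hQfin : Q.Finite := Set.Finite.image a (Set.toFinite _)
      have hQne : Q.Nonempty := ⟨a hfar.choose, hfar.choose, hfar.choose_spec, rfl⟩
      set q : ℝ := sSup Q with hq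
      obtain ⟨x₁, hx₁far, hx₁eq⟩ := hQne.csSup_mem hQfin
      have hqR : q ≤ R := by rw [hq, ← hx₁eq] at *; exact (hfarb x₁ hx₁far).1
      have hqle : ∀ x, Far x → a x ≤ q := fun x hx => le_csSup hQfin.bddAbove ⟨x, hx, rfl⟩
      have hqcov : ∀ x, Far x → a x ≤ q ∧ q ≤ b x := by
        intro x hx
        exact ⟨hqle x hx, hqR.trans (hfarb x hx).2.le⟩
      -- N is a strict subset of s
      obtain ⟨xf, vf, hvfs, _, hvfN⟩ := hfar
      have hNcard : N.card < s.card :=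
        Finset.card_lt_card ⟨Finset.filter_subset _ s, fun hsub => hvfN (hsub hvfs)⟩
      by_cases hqL : L ≤ q
      · -- q is within [L,R]: add it to the image
        refine ⟨N.image p ∪ {q}, ?_, ?_, ?_, ?_, ?_⟩
        · exact ⟨q, Finset.mem_union_right _ (Finset.mem_singleton_self q)⟩
        · intro v hv
          rcases Finset.mem_union.mp hv with h | h
          · exact himg_end v h
          · rw [Finset.mem_singleton] at h
            exact Or.inl ⟨x₁, h ▸ hx₁eq.symm⟩
        · intro x ⟨v, hvs, h1, h2⟩
          by_cases hvN : v ∈ N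
          · obtain ⟨w, hw, hw2⟩ := himg_cov x v hvN h1 h2
            exact ⟨w, Finset.mem_union_left _ hw, hw2⟩
          · exact ⟨q, Finset.mem_union_right _ (Finset.mem_singleton_self q),
              hqcov x ⟨v, hvs, ⟨h1, h2⟩, hvN⟩⟩
        · calc (N.image p ∪ {q}).card ≤ (N.image p).card + 1 := by
                simpa using Finset.card_union_le (N.image p) {q}
            _ ≤ N.card + 1 := by exact Nat.add_le_add_right (Finset.card_image_le) 1
            _ ≤ s.card := hNcard
        · apply span_le
          intro v hv
          rcases Finset.mem_union.mp hv with h | h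
          · exact himg_range v h
          · rw [Finset.mem_singleton] at h; exact ⟨h ▸ hqL, h ▸ hqR⟩
      · -- q < L: far targets' intervals contain [L,R]
        push_neg at hqL
        have hfarwide : ∀ x, Far x → a x < L ∧ R < b x := by
          intro x hx
          exact ⟨lt_of_le_of_lt (hqle x hx) hqL, (hfarb x hx).2⟩
        by_cases hNne : N.Nonempty
        · refine ⟨N.image p, hNne.image p, himg_end, ?_, (Finset.card_image_le).trans
            (Finset.card_le_card (Finset.filter_subset _ s)), span_le _ _ himg_range⟩
          intro x ⟨v, hvs, h1, h2⟩
          by_cases hvN : v ∈ N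
          · exact himg_cov x v hvN h1 h2
          · obtain ⟨v₀, hv₀⟩ := hNne
            have hw := Finset.mem_image_of_mem p hv₀
            obtain ⟨hwL, hwR⟩ := himg_range (p v₀) hw
            have hx : Far x := ⟨v, hvs, ⟨h1, h2⟩, hvN⟩
            obtain ⟨ha, hb⟩ := hfarwide x hx
            exact ⟨p v₀, hw, (ha.le.trans hwL), hwR.trans hb.le⟩
        · -- N empty: all covered targets are far; use {q}
          refine ⟨{q}, Finset.singleton_nonempty q, ?_, ?_, by simpa using hcard1, single_span q⟩
          · intro v hv; rw [Finset.mem_singleton] at hv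
            exact Or.inl ⟨x₁, hv ▸ hx₁eq.symm⟩
          · intro x ⟨v, hvs, h1, h2⟩
            have hvN : v ∉ N := fun h => hNne ⟨v, h⟩
            exact ⟨q, Finset.mem_singleton_self q, hqcov x ⟨v, hvs, ⟨h1, h2⟩, hvN⟩⟩
    · -- no far targets: every covered target has a witness in N
      push_neg at hfar
      have hNne : N.Nonempty := by
        obtain ⟨x, v, hvs, h1, h2⟩ := hcov
        by_cases hvN : v ∈ N
        · exact ⟨v, hvN⟩
        · exact absurd ⟨v, hvs, ⟨h1, h2⟩, hvN⟩ (hfar x)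
      refine ⟨N.image p, hNne.image p, himg_end, ?_, (Finset.card_image_le).trans
        (Finset.card_le_card (Finset.filter_subset _ s)), span_le _ _ himg_range⟩
      intro x ⟨v, hvs, h1, h2⟩
      by_cases hvN : v ∈ N
      · exact himg_cov x v hvN h1 h2
      · exact absurd ⟨v, hvs, ⟨h1, h2⟩, hvN⟩ (hfar x)

/-- Interval model of visibility along a chain-visible curve.  There exists an optimal
feasible collection of `m` paths all of whose viewpoints belong to the finite set of
interval endpoints `{a x : x ∈ X} ∪ {b x : x ∈ X}`. -/
theorem stmt1 {X : Type*} [Fintype X] [Nonempty X] (a b : X → ℝ)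
    (hab : ∀ x, a x ≤ b x) (m : ℕ) (hm : 1 ≤ m) (tm : ℝ) (htm : 0 ≤ tm) :
    ∃ (V : Fin m → Finset ℝ) (hV : ∀ i, (V i).Nonempty),
      (∀ x : X, ∃ i, ∃ v ∈ V i, a x ≤ v ∧ v ≤ b x) ∧
      (∀ (W : Fin m → Finset ℝ) (hW : ∀ i, (W i).Nonempty),
        (∀ x : X, ∃ i, ∃ v ∈ W i, a x ≤ v ∧ v ≤ b x) →
          (⨆ i, ((V i).max' (hV i) - (V i).min' (hV i) + (V i).card * tm)) ≤
            ⨆ i, ((W i).max' (hW i) - (W i).min' (hW i) + (W i).card * tm)) ∧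
      (∀ i, ∀ v ∈ V i, (∃ x : X, v = a x) ∨ (∃ x : X, v = b x)) := by
  classical
  haveI : Nonempty (Fin m) := ⟨⟨0, hm⟩⟩
  set E : Finset ℝ := Finset.image a Finset.univ ∪ Finset.image b Finset.univ with hE
  set g : Finset ℝ → ℝ := fun s => sSup (s : Set ℝ) - sInf (s : Set ℝ) + s.card * tm with hg
  have gval : ∀ (s : Finset ℝ) (h : s.Nonempty),
      s.max' h - s.min' h + s.card * tm = g s := by
    intro s h
    rw [hg]
    simp only [sSup_coe_finset s h, sInf_coe_finset s h]
  set G : (Fin m → Finset ℝ) → ℝ := fun V => ⨆ i, g (V i) with hG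
  set Cand : Finset (Fin m → Finset ℝ) := (Fintype.piFinset fun _ : Fin m => E.powerset).filter
      (fun V => (∀ i, (V i).Nonempty) ∧ ∀ x : X, ∃ i, ∃ v ∈ V i, a x ≤ v ∧ v ≤ b x) with hCand
  have hCne : Cand.Nonempty := by
    refine ⟨fun _ => Finset.image a Finset.univ, Finset.mem_filter.mpr ⟨?_, ?_, ?_⟩⟩
    · exact Fintype.mem_piFinset.mpr fun i => Finset.mem_powerset.mpr
        Finset.subset_union_left
    · exact fun i => Finset.Nonempty.image (Finset.univ_nonempty) a
    · intro x
      exact ⟨⟨0, hm⟩, a x, Finset.mem_image_of_mem a (Finset.mem_univ x), le_refl _, hab x⟩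
  obtain ⟨V, hVC, hVmin⟩ := Finset.exists_min_image Cand G hCne
  obtain ⟨hVpi, hVne, hVcov⟩ := Finset.mem_filter.mp hVC
  refine ⟨V, hVne, hVcov, ?_, ?_⟩
  · intro W hW hWcov
    choose s' h' hEnd hCov hCard hSpan using fun i => round_path a b (W i) (hW i)
    have hW'C : s' ∈ Cand := by
      refine Finset.mem_filter.mpr ⟨Fintype.mem_piFinset.mpr fun i =>
        Finset.mem_powerset.mpr fun v hv => ?_, h', fun x => ?_⟩
      · rcases hEnd i v hv with ⟨x, rfl⟩ | ⟨x, rfl⟩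
        · exact Finset.mem_union_left _ (Finset.mem_image_of_mem a (Finset.mem_univ x))
        · exact Finset.mem_union_right _ (Finset.mem_image_of_mem b (Finset.mem_univ x))
      · obtain ⟨i, hv⟩ := hWcov x
        exact ⟨i, hCov i x hv⟩
    have hbdd : BddAbove (Set.range fun i => g (W i)) := Set.Finite.bddAbove (Set.finite_range _)
    calc (⨆ i, ((V i).max' (hVne i) - (V i).min' (hVne i) + (V i).card * tm))
        = G V := iSup_congr fun i => gval _ (hVne i)
      _ ≤ G s' := hVmin s' hW'C
      _ ≤ G W := by
          refine ciSup_le fun i => ?_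
          refine le_trans ?_ (le_ciSup hbdd i)
          rw [← gval _ (h' i), ← gval _ (hW i)]
          exact add_le_add (hSpan i)
            (mul_le_mul_of_nonneg_right (Nat.cast_le.mpr (hCard i)) htm)
      _ = ⨆ i, ((W i).max' (hW i) - (W i).min' (hW i) + (W i).card * tm) :=
          (iSup_congr fun i => gval _ (hW i)).symm
  · intro i v hv
    have hsub : V i ⊆ E := Finset.mem_powerset.mp (Fintype.mem_piFinset.mp hVpi i)
    rcases Finset.mem_union.mp (hsub hv) with h | h
    · obtain ⟨x, _, hx⟩ := Finset.mem_image.mp h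
      exact Or.inl ⟨x, hx.symm⟩
    · obtain ⟨x, _, hx⟩ := Finset.mem_image.mp h
      exact Or.inr ⟨x, hx.symm⟩
end

section
/- The recursion terminates after finitely many steps n, every q_k lies strictly between i and j, every target is seen from V = {i, j, q_1, …, q_n}, and for every finite set S ⊆ ℝ with min S = i and max S = j from which every target is seen, |S| ≥ |V|. Consequently, for any t_m ≥ 0, among all paths whose leftmost viewpoint is i and rightmost viewpoint is j and which see every target, V achieves the minimum cost (j − i) + |V|·t_m. -/
open scoped Classical

/-- next greedy point: minimum of `b` over the unseen set `U` (junk `j` if empty). -/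
noncomputable def gq {X : Type*} (b : X → ℝ) (j : ℝ) (U : Finset X) : ℝ :=
  if h : U.Nonempty then (U.image b).min' (h.image b) else j

/-- unseen targets after `k` greedy steps. -/
noncomputable def gU {X : Type*} [Fintype X] (a b : X → ℝ) (i j : ℝ) : ℕ → Finset X
  | 0 => Finset.univ.filter (fun x => ¬ ((a x ≤ i ∧ i ≤ b x) ∨ (a x ≤ j ∧ j ≤ b x)))
  | (k+1) => (gU a b i j k).filter
      (fun x => ¬ (a x ≤ gq b j (gU a b i j k) ∧ gq b j (gU a b i j k) ≤ b x))

lemma gq_spec {X : Type*} (b : X → ℝ) (j : ℝ) {U : Finset X} (h : U.Nonempty) :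
    ∃ x ∈ U, b x = gq b j U ∧ ∀ y ∈ U, gq b j U ≤ b y := by
  rw [gq, dif_pos h]
  have hmem := (U.image b).min'_mem (h.image b)
  rw [Finset.mem_image] at hmem
  obtain ⟨x, hx, hbx⟩ := hmem
  exact ⟨x, hx, hbx, fun y hy => Finset.min'_le _ _ (Finset.mem_image_of_mem b hy)⟩

/-- Greedy single-path procedure (Algorithm 1) in the interval model.  Given `i ≤ j`
such that every visibility interval `[a x, b x]` meets `[i, j]`, there is a finite
strictly increasing greedy sequence `q 0 < q 1 < ⋯ < q (n-1)`, where `q k` is the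
minimum of `b x` over targets not yet seen from `{i, j, q 0, …, q (k-1)}`, such that:
every `q k` lies strictly between `i` and `j`; every target is seen from
`V = {i, j, q 0, …, q (n-1)}`; `V` has minimum cardinality among finite sets with
minimum `i` and maximum `j` seeing every target; and consequently, for every `tm ≥ 0`,
`V` minimizes the cost `(j - i) + |V| * tm` among all such paths. -/
theorem stmt2 {X : Type*} [Fintype X] [Nonempty X] (a b : X → ℝ)
    (hab : ∀ x, a x ≤ b x) (i j : ℝ) (hij : i ≤ j)
    (hmeet : ∀ x : X, (Set.Icc (a x) (b x) ∩ Set.Icc i j).Nonempty) :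
    ∃ (n : ℕ) (q : ℕ → ℝ),
      (∀ k l, k < l → l < n → q k < q l) ∧
      (∀ k < n, IsLeast
        (b '' {x : X |
          ¬ ∃ v ∈ insert i (insert j ((Finset.range k).image q)), a x ≤ v ∧ v ≤ b x})
        (q k)) ∧
      (∀ k < n, i < q k ∧ q k < j) ∧
      (∀ x : X, ∃ v ∈ insert i (insert j ((Finset.range n).image q)),
        a x ≤ v ∧ v ≤ b x) ∧
      (∀ (S : Finset ℝ) (hS : S.Nonempty), S.min' hS = i → S.max' hS = j →
        (∀ x : X, ∃ v ∈ S, a x ≤ v ∧ v ≤ b x) →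
        (insert i (insert j ((Finset.range n).image q))).card ≤ S.card) ∧
      (∀ tm : ℝ, 0 ≤ tm →
        ∀ (S : Finset ℝ) (hS : S.Nonempty), S.min' hS = i → S.max' hS = j →
        (∀ x : X, ∃ v ∈ S, a x ≤ v ∧ v ≤ b x) →
        (j - i) + (insert i (insert j ((Finset.range n).image q))).card * tm ≤
          (S.max' hS - S.min' hS) + S.card * tm) := by
  set U : ℕ → Finset X := gU a b i j with hU
  set q : ℕ → ℝ := fun k => gq b j (U k) with hq
  have hU0 : ∀ x, x ∈ U 0 ↔ ¬ ((a x ≤ i ∧ i ≤ b x) ∨ (a x ≤ j ∧ j ≤ b x)) := by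
    intro x; simp [hU, gU]
  have hUsucc : ∀ k x, x ∈ U (k+1) ↔ x ∈ U k ∧ ¬ (a x ≤ q k ∧ q k ≤ b x) := by
    intro k x; simp [hU, gU, Finset.mem_filter, hq]
  have hbound0 : ∀ x ∈ U 0, i < a x ∧ b x < j := by
    intro x hx
    rw [hU0] at hx
    push_neg at hx
    obtain ⟨v, ⟨hv1, hv2⟩, hv3, hv4⟩ := hmeet x
    constructor
    · by_contra h
      push_neg at h
      exact absurd (hx.1 h) (not_lt.2 (le_trans hv3 hv2))
    · by_contra h
      push_neg at h
      exact absurd (hx.2 (le_trans hv1 hv4)) (not_lt.2 h)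
  have hUsub : ∀ k, U (k+1) ⊆ U k := fun k => by
    intro x hx; exact ((hUsucc k x).1 hx).1
  have hUsub0 : ∀ k, U k ⊆ U 0 := by
    intro k
    induction k with
    | zero => exact fun x h => h
    | succ k ih => exact fun x h => ih (hUsub k h)
  have hdec : ∀ k, (U k).Nonempty → (U (k+1)).card < (U k).card := by
    intro k hk
    obtain ⟨x, hx, hbx, _⟩ := gq_spec b j hk
    refine Finset.card_lt_card ⟨hUsub k, fun hsub => ?_⟩
    have := (hUsucc k x).1 (hsub hx)
    exact this.2 ⟨le_of_le_of_eq (hab x) hbx, hbx.ge⟩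
  have hex : ∃ k, U k = ∅ := by
    by_contra h
    push_neg at h
    have key : ∀ k, (U k).card + k ≤ Fintype.card X := by
      intro k
      induction k with
      | zero => simpa using Finset.card_le_univ (U 0)
      | succ k ih =>
        have := hdec k (h k)
        omega
    have := key (Fintype.card X + 1)
    omega
  set n : ℕ := Nat.find hex with hn
  have hUn : U n = ∅ := Nat.find_spec hex
  have hUne : ∀ k < n, (U k).Nonempty :=
    fun k hk => Finset.nonempty_iff_ne_empty.2 (Nat.find_min hex hk)
  have hqspec : ∀ k < n, ∃ x ∈ U k, b x = q k ∧ ∀ y ∈ U k, q k ≤ b y :=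
    fun k hk => gq_spec b j (hUne k hk)
  have hqlt : ∀ k < n, i < q k ∧ q k < j := by
    intro k hk
    obtain ⟨x, hx, hbx, _⟩ := hqspec k hk
    have h0 := hbound0 x (hUsub0 k hx)
    exact ⟨hbx ▸ lt_of_lt_of_le h0.1 (hab x), hbx ▸ h0.2⟩
  have hmono1 : ∀ k, k + 1 < n → q k < q (k+1) := by
    intro k hk
    obtain ⟨x, hx, hbx, _⟩ := hqspec (k+1) hk
    obtain ⟨hxk, hnots⟩ := (hUsucc k x).1 hx
    have hle : q k ≤ b x := (hqspec k (by omega)).choose_spec.2.2 x hxk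
    have hax : ¬ (a x ≤ q k) := fun h => hnots ⟨h, hle⟩
    push_neg at hax
    exact hbx ▸ lt_of_lt_of_le hax (hab x)
  have hmono : ∀ k l, k < l → l < n → q k < q l := by
    intro k l hkl hln
    induction l with
    | zero => omega
    | succ l ih =>
      rcases Nat.lt_succ_iff_lt_or_eq.1 hkl with h | h
      · exact lt_trans (ih h (by omega)) (hmono1 l hln)
      · exact h ▸ hmono1 l hln
  have hmemU : ∀ k x, x ∈ U k ↔
      ¬ ∃ v ∈ insert i (insert j ((Finset.range k).image q)), a x ≤ v ∧ v ≤ b x := by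
    intro k
    induction k with
    | zero =>
      intro x
      rw [hU0]
      simp
    | succ k ih =>
      have hVins : ∀ v : ℝ, v ∈ insert i (insert j ((Finset.range (k+1)).image q)) ↔
          v = q k ∨ v ∈ insert i (insert j ((Finset.range k).image q)) := by
        intro v
        simp only [Finset.range_add_one, Finset.image_insert, Finset.mem_insert]
        tauto
      intro x
      rw [hUsucc, ih]
      constructor
      · rintro ⟨h1, h2⟩ ⟨v, hv, hP⟩
        rcases (hVins v).1 hv with rfl | hv'
        · exact h2 hP
        · exact h1 ⟨v, hv', hP⟩
      · intro h
        refine ⟨fun hex' => ?_, fun hP => h ⟨q k, (hVins (q k)).2 (Or.inl rfl), hP⟩⟩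
        obtain ⟨v, hv, hP⟩ := hex'
        exact h ⟨v, (hVins v).2 (Or.inr hv), hP⟩
  have hmincard : ∀ (S : Finset ℝ) (hS : S.Nonempty), S.min' hS = i → S.max' hS = j →
      (∀ x : X, ∃ v ∈ S, a x ≤ v ∧ v ≤ b x) →
      (insert i (insert j ((Finset.range n).image q))).card ≤ S.card := by
    intro S hS hmin hmax hcov
    have hiS : i ∈ S := hmin ▸ S.min'_mem hS
    have hjS : j ∈ S := hmax ▸ S.max'_mem hS
    have hcardV : (insert i (insert j ((Finset.range n).image q))).card ≤ n + 2 := by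
      calc (insert i (insert j ((Finset.range n).image q))).card
          ≤ (insert j ((Finset.range n).image q)).card + 1 := Finset.card_insert_le _ _
        _ ≤ ((Finset.range n).image q).card + 1 + 1 := by
            have := Finset.card_insert_le j ((Finset.range n).image q); omega
        _ ≤ n + 2 := by
            have := Finset.card_image_le (s := Finset.range n) (f := q)
            simp at this; omega
    rcases Nat.eq_zero_or_pos n with h0 | hpos
    · -- n = 0
      rw [h0]
      simp only [Finset.range_zero, Finset.image_empty]
      rcases eq_or_lt_of_le hij with rfl | hlt
      · calc (insert i (insert i (∅ : Finset ℝ))).card = 1 := by simp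
          _ ≤ S.card := Finset.card_pos.2 hS
      · have hsub : ({i, j} : Finset ℝ) ⊆ S := by
          intro v hv
          rcases Finset.mem_insert.1 hv with rfl | hv
          · exact hiS
          · rw [Finset.mem_singleton] at hv
            exact hv ▸ hjS
        simpa using Finset.card_le_card hsub
    · -- n ≥ 1
      have hij' : i < j := by
        obtain ⟨x, hx, _, _⟩ := hqspec 0 hpos
        have := hbound0 x (hUsub0 0 hx)
        linarith [hab x]
      have hclaim : ∀ k < n, k + 1 ≤ (S.filter (fun s => i < s ∧ s ≤ q k)).card := by
        intro k
        induction k with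
        | zero =>
          intro hk
          obtain ⟨x, hx, hbx, _⟩ := hqspec 0 hk
          obtain ⟨s, hsS, has, hsb⟩ := hcov x
          have h0 := hbound0 x (hUsub0 0 hx)
          have hmem : s ∈ S.filter (fun s => i < s ∧ s ≤ q 0) := by
            rw [Finset.mem_filter]
            exact ⟨hsS, lt_of_lt_of_le h0.1 has, hbx ▸ hsb⟩
          calc 1 ≤ ({s} : Finset ℝ).card := by simp
            _ ≤ _ := Finset.card_le_card (by simpa using hmem)
        | succ k ih =>
          intro hk
          have hk' : k < n := by omega
          obtain ⟨x, hx, hbx, _⟩ := hqspec (k+1) hk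
          obtain ⟨hxk, hnots⟩ := (hUsucc k x).1 hx
          have hqle : q k ≤ b x := (hqspec k hk').choose_spec.2.2 x hxk
          have hax : q k < a x := by
            by_contra h; push_neg at h; exact hnots ⟨h, hqle⟩
          obtain ⟨s, hsS, has, hsb⟩ := hcov x
          have hsgt : q k < s := lt_of_lt_of_le hax has
          have hsF : s ∈ S.filter (fun s => i < s ∧ s ≤ q (k+1)) := by
            rw [Finset.mem_filter]
            exact ⟨hsS, lt_trans (hqlt k hk').1 hsgt, hbx ▸ hsb⟩
          have hsub : insert s (S.filter (fun s => i < s ∧ s ≤ q k)) ⊆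
              S.filter (fun s => i < s ∧ s ≤ q (k+1)) := by
            intro t ht
            rcases Finset.mem_insert.1 ht with rfl | ht
            · exact hsF
            · rw [Finset.mem_filter] at ht ⊢
              exact ⟨ht.1, ht.2.1, le_trans ht.2.2 (le_of_lt (hmono1 k hk))⟩
          have hsnot : s ∉ S.filter (fun s => i < s ∧ s ≤ q k) := by
            rw [Finset.mem_filter]
            rintro ⟨-, -, hle⟩; exact absurd hsgt (not_lt.2 hle)
          calc k + 2 ≤ (S.filter (fun s => i < s ∧ s ≤ q k)).card + 1 := by
                have := ih hk'; omega
            _ = (insert s (S.filter (fun s => i < s ∧ s ≤ q k))).card :=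
                (Finset.card_insert_of_notMem hsnot).symm
            _ ≤ _ := Finset.card_le_card hsub
      set F : Finset ℝ := S.filter (fun s => i < s ∧ s ≤ q (n-1)) with hF
      have hFcard : n ≤ F.card := by
        have h1 := hclaim (n-1) (by omega)
        rw [← hF] at h1
        omega
      have hqn : q (n-1) < j := (hqlt (n-1) (by omega)).2
      have hjF : j ∉ F := by
        rw [hF, Finset.mem_filter]
        rintro ⟨-, -, hle⟩; exact absurd hqn (not_lt.2 hle)
      have hiF : i ∉ insert j F := by
        rw [Finset.mem_insert]
        rintro (rfl | hiF)
        · exact absurd hij' (lt_irrefl i)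
        · rw [hF, Finset.mem_filter] at hiF
          exact absurd hiF.2.1 (lt_irrefl i)
      have hsubS : insert i (insert j F) ⊆ S := by
        intro t ht
        rcases Finset.mem_insert.1 ht with rfl | ht
        · exact hiS
        rcases Finset.mem_insert.1 ht with rfl | ht
        · exact hjS
        · exact Finset.mem_of_mem_filter t ht
      calc (insert i (insert j ((Finset.range n).image q))).card
          ≤ n + 2 := hcardV
        _ ≤ F.card + 2 := by omega
        _ = (insert i (insert j F)).card := by
            rw [Finset.card_insert_of_notMem hiF, Finset.card_insert_of_notMem hjF]
        _ ≤ S.card := Finset.card_le_card hsubS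
  refine ⟨n, q, hmono, ?_, hqlt, ?_, hmincard, ?_⟩
  · -- IsLeast
    intro k hk
    have hset : {x : X | ¬ ∃ v ∈ insert i (insert j ((Finset.range k).image q)),
        a x ≤ v ∧ v ≤ b x} = ↑(U k) := by
      ext x; simp only [Set.mem_setOf_eq, Finset.mem_coe, hmemU k x]
    rw [hset]
    obtain ⟨x, hx, hbx, hlb⟩ := hqspec k hk
    exact ⟨⟨x, hx, hbx⟩, by rintro y ⟨z, hz, rfl⟩; exact hlb z hz⟩
  · -- coverage
    intro x
    by_contra h
    push_neg at h
    have hxn : x ∈ U n := (hmemU n x).2 (by push_neg; exact fun v hv => h v hv)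
    simp [hUn] at hxn
  · -- cost minimality
    intro tm htm S hS hmin hmax hcov
    rw [hmin, hmax]
    have hc := hmincard S hS hmin hmax hcov
    have hc' : ((insert i (insert j ((Finset.range n).image q))).card : ℝ) ≤ S.card := by
      exact_mod_cast hc
    have := mul_le_mul_of_nonneg_right hc' htm
    linarith
end

section
/- For every set S ⊆ ℝ that sees every target and every k with 1 ≤ k ≤ K, the set S ∩ (−∞, g_k] contains at least k elements. (The greedy viewpoints are rightmost possible: any seeing set must place its k-th smallest point at or before g_k.) -/
/-- Greedy viewpoint sequence in the interval model: `g k` (0-indexed) is the minimum of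
`b x` over targets not seen from `{g 0, …, g (k-1)}`, stopping at the first `K` such
that every target is seen from `{g 0, …, g (K-1)}`.  Then for every set `S ⊆ ℝ` seeing
every target and every `k < K`, the set `S ∩ (−∞, g k]` contains at least `k + 1`
elements: the greedy viewpoints are rightmost possible. -/
theorem stmt7 {X : Type*} [Fintype X] [Nonempty X] (a b : X → ℝ)
    (hab : ∀ x, a x ≤ b x) (K : ℕ) (g : ℕ → ℝ)
    (hgreedy : ∀ k < K,
      IsLeast (b '' {x : X | ¬ ∃ l < k, a x ≤ g l ∧ g l ≤ b x}) (g k))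
    (hdone : ∀ x : X, ∃ l < K, a x ≤ g l ∧ g l ≤ b x)
    (S : Set ℝ) (hS : ∀ x : X, ∃ v ∈ S, a x ≤ v ∧ v ≤ b x) :
    ∀ k < K, (k + 1 : ℕ∞) ≤ (S ∩ Set.Iic (g k)).encard := by
  intro k hk
  -- choose a witness target for each greedy step
  have hx : ∀ l, l < K → ∃ x : X, (¬ ∃ m < l, a x ≤ g m ∧ g m ≤ b x) ∧ b x = g l := by
    intro l hl
    obtain ⟨x, hx1, hx2⟩ := (hgreedy l hl).1
    exact ⟨x, hx1, hx2⟩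
  choose x hx1 hx2 using hx
  -- choose a point of S seeing each witness
  have hv : ∀ l (hl : l < K), ∃ v ∈ S, a (x l hl) ≤ v ∧ v ≤ b (x l hl) :=
    fun l hl => hS _
  choose v hv1 hv2 hv3 using hv
  -- key separation: for l < m < K, g l < a (x m _)
  have hsep : ∀ l m (hl : l < K) (hm : m < K), l < m → g l < a (x m hm) := by
    intro l m hl hm hlm
    by_contra h
    push_neg at h
    have hglb : g l ≤ b (x m hm) := by
      apply (hgreedy l hl).2
      refine ⟨x m hm, ?_, rfl⟩
      intro ⟨m', hm', hseen⟩
      exact hx1 m hm ⟨m', lt_trans hm' hlm, hseen⟩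
    exact hx1 m hm ⟨l, hlm, h, hglb⟩
  -- v l ≤ g l
  have hvle : ∀ l (hl : l < K), v l hl ≤ g l := fun l hl => (hx2 l hl) ▸ hv3 l hl
  -- the map i ↦ v i is strictly increasing on Fin (k+1)
  have hkK : ∀ i : Fin (k + 1), (i : ℕ) < K := fun i => lt_of_lt_of_le i.is_lt hk
  set f : Fin (k + 1) → ℝ := fun i => v i (hkK i) with hf
  have hmono : ∀ i j : Fin (k + 1), i < j → f i < f j := by
    intro i j hij
    calc f i ≤ g i := hvle _ (hkK i)
      _ < a (x j (hkK j)) := hsep _ _ (hkK i) (hkK j) hij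
      _ ≤ f j := hv2 _ (hkK j)
  have hinj : Function.Injective f := by
    intro i j hij
    rcases lt_trichotomy i j with h | h | h
    · exact absurd hij (ne_of_lt (hmono i j h))
    · exact h
    · exact absurd hij.symm (ne_of_lt (hmono j i h))
  have hrange : Set.range f ⊆ S ∩ Set.Iic (g k) := by
    rintro _ ⟨i, rfl⟩
    refine ⟨hv1 _ _, ?_⟩
    have h1 : f i ≤ g i := hvle _ _
    rcases eq_or_lt_of_le (Nat.lt_succ_iff.mp i.is_lt) with h | h
    · simpa [h] using h1
    · have : g i < g k := lt_of_lt_of_le (hsep _ _ (hkK i) hk h)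
        ((hx2 k hk) ▸ hab (x k hk))
      exact le_of_lt (lt_of_le_of_lt h1 this)
  calc (k + 1 : ℕ∞) = (Set.range f).encard := by
        rw [← Set.image_univ, (hinj.injOn).encard_image, Set.encard_univ]
        simp
      _ ≤ _ := Set.encard_le_encard hrange
end

section
/- The greedy set {g_1, …, g_K} sees every target, and it has minimum cardinality among all sets seeing every target: every set S ⊆ ℝ that sees every target satisfies |S| ≥ K. -/
/-- Greedy viewpoint sequence in the interval model: `g k` (0-indexed) is the minimum of
`b x` over targets not seen from `{g 0, …, g (k-1)}`, stopping at the first `K` such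
that every target is seen from `{g 0, …, g (K-1)}`.  Then the greedy set
`{g 0, …, g (K-1)}` sees every target, and any set `S ⊆ ℝ` seeing every target has at
least `K` elements. -/
theorem stmt8 {X : Type*} [Fintype X] [Nonempty X] (a b : X → ℝ)
    (hab : ∀ x, a x ≤ b x) (K : ℕ) (g : ℕ → ℝ)
    (hgreedy : ∀ k < K,
      IsLeast (b '' {x : X | ¬ ∃ l < k, a x ≤ g l ∧ g l ≤ b x}) (g k))
    (hdone : ∀ x : X, ∃ l < K, a x ≤ g l ∧ g l ≤ b x) :
    (∀ x : X, ∃ v ∈ g '' {l | l < K}, a x ≤ v ∧ v ≤ b x) ∧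
      (∀ S : Set ℝ, (∀ x : X, ∃ v ∈ S, a x ≤ v ∧ v ≤ b x) → (K : ℕ∞) ≤ S.encard) := by
  constructor
  · intro x
    obtain ⟨l, hl, h1, h2⟩ := hdone x
    exact ⟨g l, ⟨l, hl, rfl⟩, h1, h2⟩
  · intro S hS
    have hx : ∀ k, k < K → ∃ x : X, (¬ ∃ l < k, a x ≤ g l ∧ g l ≤ b x) ∧ b x = g k := by
      intro k hk
      obtain ⟨x, hx1, hx2⟩ := (hgreedy k hk).1
      exact ⟨x, hx1, hx2⟩
    choose! x hx1 hx2 using hx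
    choose! s hsS hs1 hs2 using fun k => hS (x k)
    have hmono : ∀ j k, j < k → k < K → s j < s k := by
      intro j k hjk hk
      have hj : j < K := hjk.trans hk
      have hxk := hx1 k hk
      have hunseen_j : ¬ ∃ l < j, a (x k) ≤ g l ∧ g l ≤ b (x k) := by
        rintro ⟨l, hl, h⟩; exact hxk ⟨l, hl.trans hjk, h⟩
      have hgj_le : g j ≤ b (x k) := (hgreedy j hj).2 ⟨x k, hunseen_j, rfl⟩
      have hnot : ¬ (a (x k) ≤ g j ∧ g j ≤ b (x k)) := fun h => hxk ⟨j, hjk, h⟩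
      have hlt : g j < a (x k) := by
        by_contra h
        push_neg at h
        exact hnot ⟨h, hgj_le⟩
      calc s j ≤ b (x j) := hs2 j
        _ = g j := hx2 j hj
        _ < a (x k) := hlt
        _ ≤ s k := hs1 k
    have hinj : Set.InjOn s (↑(Finset.range K)) := by
      intro i hi j hj hij
      simp only [Finset.coe_range, Set.mem_Iio] at hi hj
      rcases lt_trichotomy i j with h|h|h
      · exact absurd hij (ne_of_lt (hmono i j h hj))
      · exact h
      · exact absurd hij.symm (ne_of_lt (hmono j i h hi))
    have hsub : s '' ↑(Finset.range K) ⊆ S := by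
      rintro _ ⟨k, -, rfl⟩; exact hsS k
    calc (K : ℕ∞) = (↑(Finset.range K) : Set ℕ).encard := by
          rw [Set.encard_coe_eq_coe_finsetCard, Finset.card_range]
      _ = (s '' ↑(Finset.range K)).encard := (Set.InjOn.encard_image hinj).symm
      _ ≤ S.encard := Set.encard_mono hsub
end

section
/- Every target x ∈ X with a x ≤ r_m is seen from some viewpoint in V_1 ∪ … ∪ V_m produced by the street construction. (Every point visible from the curve up to the last endpoint r_m of the constructed paths is seen by the constructed discrete viewpoints.) -/
/-- The street construction (Algorithm 2) in the interval model of visibility along a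
chain-visible curve `[0, L]`.  Targets `x ∈ X` have visibility intervals
`[a x, b x] ⊆ [0, L]`.  `Gstar` is a set of minimum cardinality seeing every target.
Starting from `l 0 = min_x b x`, for each `i < m` the algorithm sets
`r i := min (l i + T) L`, collects `W i := Gstar ∩ (l i, r i)`, truncates `W i` to its
`⌈T / tm⌉` smallest elements (redefining `r i` as `max (W i)`) whenever
`|W i| > T / tm`, sets `V i := {l i} ∪ W i ∪ {r i}`, and moves to
`l (i+1) := min {b x : a x > r i}` (or `r i` when no target starts after `r i`). -/
structure StreetData (X : Type*) [Fintype X] [Nonempty X] where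
  a : X → ℝ
  b : X → ℝ
  hab : ∀ x, a x ≤ b x
  L : ℝ
  hL : 0 < L
  ha0 : ∀ x, 0 ≤ a x
  hbL : ∀ x, b x ≤ L
  tm : ℝ
  htm : 0 < tm
  T : ℝ
  hT : 0 < T
  m : ℕ
  hm : 1 ≤ m
  Gstar : Finset ℝ
  hGsub : ↑Gstar ⊆ Set.Icc 0 L
  hGsees : ∀ x, ∃ v ∈ Gstar, a x ≤ v ∧ v ≤ b x
  hGmin : ∀ S : Finset ℝ, ↑S ⊆ Set.Icc 0 L →
    (∀ x, ∃ v ∈ S, a x ≤ v ∧ v ≤ b x) → Gstar.card ≤ S.card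
  l : ℕ → ℝ
  r : ℕ → ℝ
  W : ℕ → Finset ℝ
  V : ℕ → Finset ℝ
  hl0 : IsLeast (Set.range b) (l 0)
  hstep_trunc : ∀ i < m,
    (((Gstar.filter (fun g => l i < g ∧ g < min (l i + T) L)).card : ℝ) > T / tm →
      W i ⊆ Gstar.filter (fun g => l i < g ∧ g < min (l i + T) L) ∧
      (W i).card = ⌈T / tm⌉₊ ∧
      (∀ w ∈ W i, ∀ g ∈ Gstar.filter (fun g => l i < g ∧ g < min (l i + T) L),
        g ≤ w → g ∈ W i) ∧
      IsGreatest (↑(W i) : Set ℝ) (r i))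
  hstep_no_trunc : ∀ i < m,
    (¬ ((Gstar.filter (fun g => l i < g ∧ g < min (l i + T) L)).card : ℝ) > T / tm →
      W i = Gstar.filter (fun g => l i < g ∧ g < min (l i + T) L) ∧
      r i = min (l i + T) L)
  hV : ∀ i < m, V i = insert (l i) (insert (r i) (W i))
  hlsucc_ex : ∀ i < m, (∃ x, r i < a x) →
    IsLeast {t : ℝ | ∃ x, r i < a x ∧ t = b x} (l (i + 1))
  hlsucc_nex : ∀ i < m, (¬ ∃ x, r i < a x) → l (i + 1) = r i

lemma street_core {X : Type*} [Fintype X] [Nonempty X] (D : StreetData X)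
    (i : ℕ) (hi : i < D.m) (x : X) (hlb : D.l i ≤ D.b x) (har : D.a x ≤ D.r i) :
    ∃ v ∈ D.V i, D.a x ≤ v ∧ v ≤ D.b x := by
  rw [D.hV i hi]
  by_cases h1 : D.a x ≤ D.l i
  · exact ⟨D.l i, by simp, h1, hlb⟩
  push_neg at h1
  by_cases h2 : D.r i ≤ D.b x
  · exact ⟨D.r i, by simp, har, h2⟩
  push_neg at h2
  obtain ⟨g, hg, hag, hgb⟩ := D.hGsees x
  have hlg : D.l i < g := lt_of_lt_of_le h1 hag
  have hgr : g < D.r i := lt_of_le_of_lt hgb h2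
  by_cases ht : ((D.Gstar.filter
      (fun g => D.l i < g ∧ g < min (D.l i + D.T) D.L)).card : ℝ) > D.T / D.tm
  · obtain ⟨hWsub, -, hdown, hgreat⟩ := D.hstep_trunc i hi ht
    have hrW : D.r i ∈ D.W i := hgreat.1
    have hrfil := hWsub hrW
    have hgfil : g ∈ D.Gstar.filter
        (fun g => D.l i < g ∧ g < min (D.l i + D.T) D.L) :=
      Finset.mem_filter.2 ⟨hg, hlg, lt_trans hgr (Finset.mem_filter.1 hrfil).2.2⟩
    have hgW := hdown _ hrW g hgfil (le_of_lt hgr)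
    exact ⟨g, by simp [hgW], hag, hgb⟩
  · obtain ⟨hWeq, hreq⟩ := D.hstep_no_trunc i hi ht
    have hgW : g ∈ D.W i := by
      rw [hWeq]; exact Finset.mem_filter.2 ⟨hg, hlg, hreq ▸ hgr⟩
    exact ⟨g, by simp [hgW], hag, hgb⟩

/-- Every target `x` with `a x ≤ r m` (the last right endpoint produced by the street
construction, 0-indexed as `r (m-1)`) is seen from some viewpoint in `V 1 ∪ … ∪ V m`. -/
theorem stmt9 {X : Type*} [Fintype X] [Nonempty X] (D : StreetData X) :
    ∀ x : X, D.a x ≤ D.r (D.m - 1) →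
      ∃ i < D.m, ∃ v ∈ D.V i, D.a x ≤ v ∧ v ≤ D.b x := by
  have key : ∀ i, i < D.m → ∀ x : X, D.a x ≤ D.r i →
      ∃ j < D.m, ∃ v ∈ D.V j, D.a x ≤ v ∧ v ≤ D.b x := by
    intro i
    induction i with
    | zero =>
      intro hi x hx
      exact ⟨0, hi, street_core D 0 hi x (D.hl0.2 ⟨x, rfl⟩) hx⟩
    | succ n ih =>
      intro hi x hx
      by_cases h : D.a x ≤ D.r n
      · exact ih (Nat.lt_of_succ_lt hi) x h
      · push_neg at h
        have hleast := D.hlsucc_ex n (Nat.lt_of_succ_lt hi) ⟨x, h⟩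
        have hlb : D.l (n + 1) ≤ D.b x := hleast.2 ⟨x, h, rfl⟩
        exact ⟨n + 1, hi, street_core D (n + 1) hi x hlb hx⟩
  intro x hx
  exact key _ (Nat.sub_lt D.hm one_pos) x hx
end

section
/- If there exist m paths U_1, …, U_m, each contained in [0, L] and each of cost at most T̂, such that every target in X is seen from some point of U_1 ∪ … ∪ U_m, then every target in X is seen from some viewpoint in V_1 ∪ … ∪ V_m produced by the street construction. (If the construction fails to cover some target, then the guess T̂ is strictly below the optimal cost.) -/
/-- If there exist `m` paths in `[0, L]`, each of cost at most `T`, jointly seeing every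
target, then every target is seen from some viewpoint in `V 1 ∪ … ∪ V m` produced by the
street construction. -/
theorem stmt11 {X : Type*} [Fintype X] [Nonempty X] (D : StreetData X)
    (U : Fin D.m → Finset ℝ) (hUne : ∀ i, (U i).Nonempty)
    (hUsub : ∀ i, ↑(U i) ⊆ Set.Icc 0 D.L)
    (hUcost : ∀ i, (U i).max' (hUne i) - (U i).min' (hUne i) + (U i).card * D.tm ≤ D.T)
    (hUsees : ∀ x : X, ∃ i, ∃ v ∈ U i, D.a x ≤ v ∧ v ≤ D.b x) :
    ∀ x : X, ∃ i < D.m, ∃ v ∈ D.V i, D.a x ≤ v ∧ v ≤ D.b x := by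
  classical
  obtain ⟨a, b, hab, L, hL, ha0, hbL, tm, htm, T, hT, m, hm, Gstar, hGsub, hGsees, hGmin,
    l, r, W, V, hl0, htrunc, hnotrunc, hVdef, hexl, hnexl⟩ := D
  dsimp only at *
  -- basic facts about target intervals
  have hbge : ∀ x : X, 0 ≤ b x := fun x => (ha0 x).trans (hab x)
  have hl0_le : ∀ x : X, l 0 ≤ b x := fun x => hl0.2 ⟨x, rfl⟩
  have hl0_bounds : 0 ≤ l 0 ∧ l 0 ≤ L := by
    obtain ⟨x, hx⟩ := hl0.1
    exact ⟨hx ▸ hbge x, hx ▸ hbL x⟩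
  -- the filter sets
  set F : ℕ → Finset ℝ := fun i => Gstar.filter (fun g => l i < g ∧ g < min (l i + T) L)
    with hF_def
  have hFmem : ∀ i : ℕ, ∀ z : ℝ, z ∈ F i ↔ (z ∈ Gstar ∧ l i < z ∧ z < min (l i + T) L) := by
    intro i z
    simp only [hF_def, Finset.mem_filter]
  -- one-step facts
  have stepf : ∀ i, i < m → 0 ≤ l i → l i ≤ L →
      (l i ≤ r i ∧ r i ≤ min (l i + T) L ∧ 0 ≤ r i ∧ r i ≤ L ∧ r i ≤ l (i+1)
        ∧ 0 ≤ l (i+1) ∧ l (i+1) ≤ L) := by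
    intro i hi h0 hLi
    have hr : l i ≤ r i ∧ r i ≤ min (l i + T) L := by
      by_cases htr : ((F i).card : ℝ) > T / tm
      · obtain ⟨hWsub, hWcard, hWdc, hWgr⟩ := htrunc i hi htr
        have hmem : r i ∈ F i := hWsub (Finset.mem_coe.mp hWgr.1)
        rw [hFmem] at hmem
        exact ⟨hmem.2.1.le, hmem.2.2.le⟩
      · obtain ⟨_, hre⟩ := hnotrunc i hi htr
        rw [hre]
        exact ⟨le_min (by linarith) hLi, le_refl _⟩
    have hrL : r i ≤ L := hr.2.trans (min_le_right _ _)
    have hr0 : 0 ≤ r i := h0.trans hr.1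
    have hnext : r i ≤ l (i+1) ∧ 0 ≤ l (i+1) ∧ l (i+1) ≤ L := by
      by_cases hex : ∃ x, r i < a x
      · obtain ⟨hmem, _⟩ := hexl i hi hex
        obtain ⟨x, hxa, hxb⟩ := hmem
        rw [hxb]
        exact ⟨(hxa.trans_le (hab x)).le, hbge x, hbL x⟩
      · rw [hnexl i hi hex]
        exact ⟨le_refl _, hr0, hrL⟩
    exact ⟨hr.1, hr.2, hr0, hrL, hnext.1, hnext.2.1, hnext.2.2⟩
  have hlb : ∀ i, i ≤ m → 0 ≤ l i ∧ l i ≤ L := by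
    intro i
    induction i with
    | zero => exact fun _ => hl0_bounds
    | succ n ih =>
      intro hn
      have hn' : n < m := by omega
      obtain ⟨_, _, _, _, _, h1, h2⟩ := stepf n hn' (ih (by omega)).1 (ih (by omega)).2
      exact ⟨h1, h2⟩
  have hstepm : ∀ i, i < m → (l i ≤ r i ∧ r i ≤ min (l i + T) L ∧ 0 ≤ r i ∧ r i ≤ L
      ∧ r i ≤ l (i+1) ∧ 0 ≤ l (i+1) ∧ l (i+1) ≤ L) :=
    fun i hi => stepf i hi (hlb i hi.le).1 (hlb i hi.le).2
  have hlr : ∀ i, i < m → l i ≤ r i := fun i hi => (hstepm i hi).1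
  have hrmin : ∀ i, i < m → r i ≤ min (l i + T) L := fun i hi => (hstepm i hi).2.1
  have hr0 : ∀ i, i < m → 0 ≤ r i := fun i hi => (hstepm i hi).2.2.1
  have hrL : ∀ i, i < m → r i ≤ L := fun i hi => (hstepm i hi).2.2.2.1
  have hrl1 : ∀ i, i < m → r i ≤ l (i+1) := fun i hi => (hstepm i hi).2.2.2.2.1
  have lmono : ∀ j, j ≤ m → ∀ i, i ≤ j → l i ≤ l j := by
    intro j
    induction j with
    | zero =>
      intro _ i hi
      have : i = 0 := by omega
      rw [this]
    | succ n ih =>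
      intro hn i hi
      rcases Nat.lt_or_ge i (n+1) with h | h
      · have hin : i ≤ n := by omega
        exact ((ih (by omega) i hin).trans (hlr n (by omega))).trans (hrl1 n (by omega))
      · have : i = n + 1 := by omega
        rw [this]
  have rlmono : ∀ i j, i < j → j ≤ m → r i ≤ l j :=
    fun i j h1 h2 => (hrl1 i (by omega)).trans (lmono j h2 (i+1) (by omega))
  have rmono : ∀ i j, i ≤ j → j < m → r i ≤ r j := by
    intro i j h1 h2
    rcases eq_or_lt_of_le h1 with h | h
    · rw [h]
    · exact (rlmono i j h (by omega)).trans (hlr j h2)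
  -- Claim A: every target starting before r i is seen by some V i' with i' ≤ i
  have windowC : ∀ i, i < m → ∀ x : X, l i < a x → a x ≤ r i →
      ∃ v ∈ V i, a x ≤ v ∧ v ≤ b x := by
    intro i hi x hlx hrx
    obtain ⟨g, hgG, hga, hgb⟩ := hGsees x
    have hVi := hVdef i hi
    by_cases hgr : r i ≤ g
    · refine ⟨r i, ?_, hrx, hgr.trans hgb⟩
      rw [hVi]
      exact Finset.mem_insert_of_mem (Finset.mem_insert_self _ _)
    · push_neg at hgr
      have hgF : g ∈ F i := by
        rw [hFmem]
        exact ⟨hgG, lt_of_lt_of_le hlx hga, lt_of_lt_of_le hgr (hrmin i hi)⟩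
      have hgW : g ∈ W i := by
        by_cases htr : ((F i).card : ℝ) > T / tm
        · obtain ⟨hWsub, hWcard, hWdc, hWgr⟩ := htrunc i hi htr
          exact hWdc (r i) (Finset.mem_coe.mp hWgr.1) g hgF hgr.le
        · obtain ⟨hWeq, _⟩ := hnotrunc i hi htr
          rw [hWeq]
          exact hgF
      refine ⟨g, ?_, hga, hgb⟩
      rw [hVi]
      exact Finset.mem_insert_of_mem (Finset.mem_insert_of_mem hgW)
  have claimAB : ∀ i, i < m → ∀ x : X,
      (a x ≤ l i → ∃ i', i' ≤ i ∧ ∃ v ∈ V i', a x ≤ v ∧ v ≤ b x) ∧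
      (a x ≤ r i → ∃ i', i' ≤ i ∧ ∃ v ∈ V i', a x ≤ v ∧ v ≤ b x) := by
    intro i
    induction i with
    | zero =>
      intro h0 x
      have hlcase : a x ≤ l 0 → ∃ i', i' ≤ 0 ∧ ∃ v ∈ V i', a x ≤ v ∧ v ≤ b x := by
        intro h
        refine ⟨0, le_refl 0, l 0, ?_, h, hl0_le x⟩
        rw [hVdef 0 h0]
        exact Finset.mem_insert_self _ _
      refine ⟨hlcase, ?_⟩
      intro h
      by_cases h' : a x ≤ l 0
      · exact hlcase h'
      · push_neg at h'
        obtain ⟨v, hv, h1, h2⟩ := windowC 0 h0 x h' h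
        exact ⟨0, le_refl 0, v, hv, h1, h2⟩
    | succ n ih =>
      intro hn1 x
      have hn : n < m := by omega
      have hlcase : a x ≤ l (n+1) → ∃ i', i' ≤ n+1 ∧ ∃ v ∈ V i', a x ≤ v ∧ v ≤ b x := by
        intro h
        by_cases har : a x ≤ r n
        · obtain ⟨i', hi', rest⟩ := (ih hn x).2 har
          exact ⟨i', by omega, rest⟩
        · push_neg at har
          have hle : l (n+1) ≤ b x := (hexl n hn ⟨x, har⟩).2 ⟨x, har, rfl⟩
          refine ⟨n+1, le_refl _, l (n+1), ?_, h, hle⟩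
          rw [hVdef (n+1) hn1]
          exact Finset.mem_insert_self _ _
      refine ⟨hlcase, ?_⟩
      intro h
      by_cases h' : a x ≤ l (n+1)
      · exact hlcase h'
      · push_neg at h'
        obtain ⟨v, hv, h1, h2⟩ := windowC (n+1) hn1 x h' h
        exact ⟨n+1, le_refl _, v, hv, h1, h2⟩
  intro x
  by_cases hx : a x ≤ r (m - 1)
  · obtain ⟨i', hi', v, hvV, h1, h2⟩ := (claimAB (m-1) (by omega) x).2 hx
    exact ⟨i', by omega, v, hvV, h1, h2⟩
  exfalso
  push_neg at hx
  -- `x` is a target beyond the reach of the construction; derive a contradiction.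
  have hex_all : ∀ i, i < m → ∃ z : X, r i < a z := by
    intro i hi
    exact ⟨x, lt_of_le_of_lt (rmono i (m-1) (by omega) (by omega)) hx⟩
  have r_eq : ∀ e, e < m → ¬ ((F e).card : ℝ) > T / tm → r e = l e + T := by
    intro e he hnt
    obtain ⟨_, hre⟩ := hnotrunc e he hnt
    rcases min_cases (l e + T) L with ⟨h1, _⟩ | ⟨h1, _⟩
    · rw [hre, h1]
    · exfalso
      obtain ⟨z, hz⟩ := hex_all e he
      have : a z ≤ L := (hab z).trans (hbL z)
      rw [hre, h1] at hz
      linarith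
  -- the witness targets y s   (s = 0, 1, ..., m)
  have hy : ∀ s : ℕ, ∃ xx : X, (1 ≤ s → s ≤ m → r (s-1) < a xx) ∧ (s < m → b xx = l s) := by
    intro s
    rcases Nat.eq_zero_or_pos s with h0 | h1
    · obtain ⟨xx, hxx⟩ := hl0.1
      exact ⟨xx, fun h _ => absurd h (by omega), fun _ => by rw [h0]; exact hxx⟩
    · by_cases hsm : s ≤ m
      · rcases eq_or_lt_of_le hsm with he | hlt
        · refine ⟨x, fun _ _ => ?_, fun h => absurd h (by omega)⟩
          have : s - 1 = m - 1 := by omega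
          rw [this]
          exact hx
        · obtain ⟨hmem, _⟩ := hexl (s-1) (by omega) (hex_all (s-1) (by omega))
          obtain ⟨xx, hxa, hxb⟩ := hmem
          have hs1 : s - 1 + 1 = s := by omega
          rw [hs1] at hxb
          exact ⟨xx, fun _ _ => hxa, fun _ => hxb.symm⟩
      · exact ⟨Classical.arbitrary X, fun _ h => absurd h hsm, fun h => absurd h (by omega)⟩
  choose y hy1 hy2 using hy
  -- the Gstar witness points g s
  choose gpt hgmem hga hgb using fun s => hGsees (y s)
  -- the path witness points vv s on path jj s
  choose jj vv hvU hva hvb using fun s => hUsees (y s)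
  have glow : ∀ s, 1 ≤ s → s ≤ m → r (s-1) < gpt s :=
    fun s h1 h2 => lt_of_lt_of_le (hy1 s h1 h2) (hga s)
  have gle : ∀ s, s < m → gpt s ≤ l s := fun s h => le_of_le_of_eq (hgb s) (hy2 s h)
  have gbnd : ∀ s, 0 ≤ gpt s ∧ gpt s ≤ L := by
    intro s
    have := hGsub (Finset.mem_coe.mpr (hgmem s))
    exact ⟨this.1, this.2⟩
  have vlow : ∀ s, 1 ≤ s → s ≤ m → r (s-1) < vv s :=
    fun s h1 h2 => lt_of_lt_of_le (hy1 s h1 h2) (hva s)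
  have vle : ∀ s, s < m → vv s ≤ l s := fun s h => le_of_le_of_eq (hvb s) (hy2 s h)
  have vbnd : ∀ s, 0 ≤ vv s ∧ vv s ≤ L := by
    intro s
    have := hUsub (jj s) (Finset.mem_coe.mpr (hvU s))
    exact ⟨this.1, this.2⟩
  -- the union of all paths
  set S : Finset ℝ := Finset.univ.biUnion U with hS_def
  have hSmem : ∀ z ∈ S, 0 ≤ z ∧ z ≤ L := by
    intro z hz
    obtain ⟨j0, _, hzU⟩ := Finset.mem_biUnion.mp hz
    have := hUsub j0 (Finset.mem_coe.mpr hzU)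
    exact ⟨this.1, this.2⟩
  have hSofU : ∀ (j0 : Fin m), ∀ z ∈ U j0, z ∈ S := by
    intro j0 z hz
    exact Finset.mem_biUnion.mpr ⟨j0, Finset.mem_univ _, hz⟩
  have hSsub : ↑S ⊆ Set.Icc (0:ℝ) L := by
    intro z hz
    exact Set.mem_Icc.mpr (hSmem z (Finset.mem_coe.mp hz))
  have hSsees : ∀ x' : X, ∃ v ∈ S, a x' ≤ v ∧ v ≤ b x' := by
    intro x'
    obtain ⟨j0, w, h1, h2, h3⟩ := hUsees x'
    exact ⟨w, hSofU j0 w h1, h2, h3⟩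
  have hGS : Gstar.card ≤ S.card := hGmin S hSsub hSsees
  have gmono : ∀ s t, s < t → t ≤ m → gpt s < gpt t := by
    intro s t hst ht
    have h1 : gpt s ≤ l s := gle s (by omega)
    have h2 : l s ≤ r s := hlr s (by omega)
    have h3 : r s ≤ r (t-1) := rmono s (t-1) (by omega) (by omega)
    have h4 : r (t-1) < gpt t := glow t (by omega) ht
    linarith
  have hgimage : m + 1 ≤ Gstar.card := by
    have himg : Finset.image gpt (Finset.range (m+1)) ⊆ Gstar := by
      intro z hz
      obtain ⟨s, _, rfl⟩ := Finset.mem_image.mp hz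
      exact hgmem s
    have hinj : Set.InjOn gpt ↑(Finset.range (m+1)) := by
      intro s hs t ht hst
      have hsm : s < m + 1 := by simpa using Finset.mem_coe.mp hs
      have htm' : t < m + 1 := by simpa using Finset.mem_coe.mp ht
      rcases lt_trichotomy s t with h | h | h
      · exact absurd hst (ne_of_lt (gmono s t h (by omega)))
      · exact h
      · exact absurd hst.symm (ne_of_lt (gmono t s h (by omega)))
    have := Finset.card_image_of_injOn hinj
    rw [Finset.card_range] at this
    have := Finset.card_le_card himg
    omega
  rcases le_or_gt (T / tm) 1 with hk1 | hk2
  · -- easy case : every path is a single point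
    have hTtm : T ≤ tm := by
      rw [div_le_one htm] at hk1
      exact hk1
    have hcard1 : ∀ j0 : Fin m, (U j0).card = 1 := by
      intro j0
      have hc := hUcost j0
      have hmm : (U j0).min' (hUne j0) ≤ (U j0).max' (hUne j0) :=
        Finset.min'_le _ _ (Finset.max'_mem _ _)
      have h2 : ((U j0).card : ℝ) ≤ 1 := by nlinarith
      have h3 : (U j0).card ≤ 1 := by exact_mod_cast h2
      have h4 : 0 < (U j0).card := Finset.card_pos.mpr (hUne j0)
      omega
    have hScard : S.card ≤ m := by
      have h1 : S.card ≤ ∑ j : Fin m, (U j).card := Finset.card_biUnion_le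
      have h2 : ∑ j : Fin m, (U j).card = m := by
        simp [hcard1]
      omega
    omega
  · -- main case
    -- k = the truncation size
    set k : ℕ := ⌈T / tm⌉₊ with hk_def
    have hk2' : 1 < k := by
      rw [hk_def]
      exact Nat.lt_ceil.mpr (by push_cast; exact hk2)
    -- every path has at most k - 1 points
    have cap : ∀ j0 : Fin m, (U j0).card ≤ k - 1 := by
      intro j0
      have hlt : (U j0).card < k := by
        rw [hk_def]
        apply Nat.lt_ceil.mpr
        show ((U j0).card : ℝ) < T / tm
        have h1 : 0 < (U j0).card := Finset.card_pos.mpr (hUne j0)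
        rcases Nat.lt_or_ge (U j0).card 2 with h | h
        · have he1 : (U j0).card = 1 := by omega
          rw [he1]
          push_cast
          exact hk2
        · have hminmax : (U j0).min' (hUne j0) < (U j0).max' (hUne j0) :=
            Finset.min'_lt_max'_of_card _ (by omega)
          have hc := hUcost j0
          rw [lt_div_iff₀ htm]
          linarith
      omega
    -- the localization lemma: Gstar has at most 2 more points in any interval (p,q]
    -- than the union S of the paths has
    have loc : ∀ p q : ℝ, p ≤ L → 0 ≤ q → q ≤ L →
        (Gstar.filter (fun z => p < z ∧ z ≤ q)).card ≤
          (S.filter (fun z => p < z ∧ z ≤ q)).card + 2 := by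
      intro p q hpL hq0 hqL
      set C : Finset ℝ :=
        insert (max p 0) (insert q ((Gstar.filter (fun z => ¬(p < z ∧ z ≤ q))) ∪
          (S.filter (fun z => p < z ∧ z ≤ q)))) with hC_def
      have hqC : q ∈ C := Finset.mem_insert_of_mem (Finset.mem_insert_self _ _)
      have hpC : max p 0 ∈ C := Finset.mem_insert_self _ _
      have hGC : ∀ z, z ∈ Gstar.filter (fun z => ¬(p < z ∧ z ≤ q)) → z ∈ C :=
        fun z hz => Finset.mem_insert_of_mem (Finset.mem_insert_of_mem
          (Finset.mem_union_left _ hz))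
      have hSC : ∀ z, z ∈ S.filter (fun z => p < z ∧ z ≤ q) → z ∈ C :=
        fun z hz => Finset.mem_insert_of_mem (Finset.mem_insert_of_mem
          (Finset.mem_union_right _ hz))
      have hCsub : ↑C ⊆ Set.Icc (0:ℝ) L := by
        intro z hz
        rcases Finset.mem_insert.mp (Finset.mem_coe.mp hz) with h | h
        · rw [h]
          exact ⟨le_max_right _ _, max_le hpL hL.le⟩
        rcases Finset.mem_insert.mp h with h' | h'
        · rw [h']
          exact ⟨hq0, hqL⟩
        rcases Finset.mem_union.mp h' with h'' | h''
        · exact hGsub (Finset.mem_coe.mpr (Finset.mem_filter.mp h'').1)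
        · exact Set.mem_Icc.mpr (hSmem z (Finset.mem_filter.mp h'').1)
      have hCsees : ∀ x' : X, ∃ v ∈ C, a x' ≤ v ∧ v ≤ b x' := by
        intro x'
        obtain ⟨g, hgG, hga', hgb'⟩ := hGsees x'
        by_cases hP : p < g ∧ g ≤ q
        · by_cases hbq : q ≤ b x'
          · exact ⟨q, hqC, hga'.trans hP.2, hbq⟩
          · push_neg at hbq
            by_cases hap : a x' ≤ p
            · refine ⟨max p 0, hpC, le_trans hap (le_max_left _ _), ?_⟩
              exact max_le (hP.1.le.trans hgb') ((ha0 x').trans (hab x'))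
            · push_neg at hap
              obtain ⟨j0, w, hwU, hwa, hwb⟩ := hUsees x'
              refine ⟨w, hSC w (Finset.mem_filter.mpr ⟨hSofU j0 w hwU,
                lt_of_lt_of_le hap hwa, hwb.trans hbq.le⟩), hwa, hwb⟩
        · exact ⟨g, hGC g (Finset.mem_filter.mpr ⟨hgG, hP⟩), hga', hgb'⟩
      have h1 : Gstar.card ≤ C.card := hGmin C hCsub hCsees
      have h2 : C.card ≤ ((Gstar.filter (fun z => ¬(p < z ∧ z ≤ q))).card +
          (S.filter (fun z => p < z ∧ z ≤ q)).card) + 2 := by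
        have c1 := Finset.card_insert_le (max p 0) (insert q
          ((Gstar.filter (fun z => ¬(p < z ∧ z ≤ q))) ∪ (S.filter (fun z => p < z ∧ z ≤ q))))
        have c2 := Finset.card_insert_le q
          ((Gstar.filter (fun z => ¬(p < z ∧ z ≤ q))) ∪ (S.filter (fun z => p < z ∧ z ≤ q)))
        have c3 := Finset.card_union_le (Gstar.filter (fun z => ¬(p < z ∧ z ≤ q)))
          (S.filter (fun z => p < z ∧ z ≤ q))
        rw [hC_def]
        omega
      have h3 : (Gstar.filter (fun z => p < z ∧ z ≤ q)).card +
          (Gstar.filter (fun z => ¬(p < z ∧ z ≤ q))).card = Gstar.card :=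
        Finset.card_filter_add_card_filter_not _
      omega
    -- boundary functions for the groups
    set lo : ℕ → ℝ := fun i => if i = 0 then (-1 : ℝ) else r (i-1) with hlo_def
    set up : ℕ → ℝ := fun e => if e = m then L else l e with hup_def
    have lo_zero : lo 0 = -1 := by simp [hlo_def]
    have lo_succ : ∀ i, lo (i+1) = r i := by intro i; simp [hlo_def]
    have up_m : up m = L := by simp [hup_def]
    have up_lt : ∀ e, e < m → up e = l e := by
      intro e he
      simp [hup_def, Nat.ne_of_lt he]
    have lo_le_L : ∀ i, i ≤ m → lo i ≤ L := by
      intro i hi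
      cases i with
      | zero => rw [lo_zero]; linarith
      | succ n => rw [lo_succ]; exact hrL n (by omega)
    have lo_lt : ∀ i, i ≤ m → ∀ z : ℝ, 0 ≤ z → (1 ≤ i → r (i-1) < z) → lo i < z := by
      intro i hi z hz h
      cases i with
      | zero => rw [lo_zero]; linarith
      | succ n =>
        rw [lo_succ]
        have := h (by omega)
        simpa using this
    have lo_le_r : ∀ ii e, ii ≤ e + 1 → e < m → lo ii ≤ r e := by
      intro ii e h1 h2
      cases ii with
      | zero => rw [lo_zero]; have := hr0 e h2; linarith
      | succ n => rw [lo_succ]; exact rmono n e (by omega) h2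
    have up_bounds : ∀ e, e ≤ m → 0 ≤ up e ∧ up e ≤ L := by
      intro e he
      by_cases h : e = m
      · rw [h, up_m]; exact ⟨hL.le, le_refl _⟩
      · rw [up_lt e (by omega)]; exact hlb e he
    have up_ge : ∀ e, e ≤ m → ∀ z : ℝ, (e < m → z ≤ l e) → z ≤ L → z ≤ up e := by
      intro e he z h1 h2
      by_cases h : e = m
      · rw [h, up_m]; exact h2
      · rw [up_lt e (by omega)]; exact h1 (by omega)
    -- The group bound: if all steps in [i,e) are truncating, then at least e-i+1 paths
    -- have a point in the group interval (lo i, up e].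
    have GB : ∀ i e, i ≤ e → e ≤ m → (∀ s, i ≤ s → s < e → ((F s).card : ℝ) > T / tm) →
        e - i + 1 ≤ (Finset.univ.filter
          (fun j0 : Fin m => ∃ pt ∈ U j0, lo i < pt ∧ pt ≤ up e)).card := by
      intro i e hie hem htr
      set Qg := Finset.univ.filter
        (fun j0 : Fin m => ∃ pt ∈ U j0, lo i < pt ∧ pt ≤ up e) with hQg_def
      have hBmem : ∀ s, i ≤ s → s < e → ∀ z ∈ insert (gpt s) (W s),
          z ∈ Gstar ∧ (1 ≤ s → r (s-1) < z) ∧ 0 ≤ z ∧ z ≤ r s := by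
        intro s hsi hse z hz
        have hsm : s < m := by omega
        rcases Finset.mem_insert.mp hz with h | h
        · subst h
          exact ⟨hgmem s, fun h1 => glow s h1 (by omega), (gbnd s).1,
            (gle s hsm).trans (hlr s hsm)⟩
        · obtain ⟨hWsub, hWcard, hWdc, hWgr⟩ := htrunc s hsm (htr s hsi hse)
          have hzF := hWsub h
          rw [hFmem] at hzF
          refine ⟨hzF.1, fun h1 => ?_, (hGsub (Finset.mem_coe.mpr hzF.1)).1,
            hWgr.2 (Finset.mem_coe.mpr h)⟩
          have h2 : r (s-1) ≤ l s := by
            have h3 := hrl1 (s-1) (by omega)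
            have hs1 : s - 1 + 1 = s := by omega
            rwa [hs1] at h3
          linarith [hzF.2.1]
      have hBcard : ∀ s, i ≤ s → s < e → (insert (gpt s) (W s)).card = k + 1 := by
        intro s hsi hse
        have hsm : s < m := by omega
        obtain ⟨hWsub, hWcard, hWdc, hWgr⟩ := htrunc s hsm (htr s hsi hse)
        have hnm : gpt s ∉ W s := by
          intro hmem
          have hzF := hWsub hmem
          rw [hFmem] at hzF
          have := gle s hsm
          linarith [hzF.2.1]
        rw [Finset.card_insert_of_notMem hnm, hWcard]
      have hdisj : ∀ s ∈ Finset.Ico i e, ∀ t ∈ Finset.Ico i e, s ≠ t →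
          Disjoint (insert (gpt s) (W s)) (insert (gpt t) (W t)) := by
        have key : ∀ s' t', i ≤ s' → s' < e → i ≤ t' → t' < e → s' < t' →
            Disjoint (insert (gpt s') (W s')) (insert (gpt t') (W t')) := by
          intro s' t' h1 h2 h3 h4 hlt'
          rw [Finset.disjoint_left]
          intro z hz1 hz2
          have ha1 := hBmem s' h1 h2 z hz1
          have ha2 := hBmem t' h3 h4 z hz2
          have hzr : z ≤ r s' := ha1.2.2.2
          have hzl : r (t'-1) < z := ha2.2.1 (by omega)
          have hmono : r s' ≤ r (t'-1) := rmono s' (t'-1) (by omega) (by omega)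
          linarith
        intro s hs t ht hst
        rw [Finset.mem_Ico] at hs ht
        rcases lt_or_gt_of_ne hst with h | h
        · exact key s t hs.1 hs.2 ht.1 ht.2 h
        · exact (key t s ht.1 ht.2 hs.1 hs.2 h).symm
      have hgenm : gpt e ∉ (Finset.Ico i e).biUnion (fun s => insert (gpt s) (W s)) := by
        intro hmem
        obtain ⟨s, hs, hz⟩ := Finset.mem_biUnion.mp hmem
        rw [Finset.mem_Ico] at hs
        have h1 := (hBmem s hs.1 hs.2 _ hz).2.2.2
        have h2 : r (e-1) < gpt e := glow e (by omega) hem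
        have h3 : r s ≤ r (e-1) := rmono s (e-1) (by omega) (by omega)
        linarith
      set GG : Finset ℝ := insert (gpt e)
        ((Finset.Ico i e).biUnion (fun s => insert (gpt s) (W s))) with hGG_def
      have hGGcard : GG.card = (e - i) * (k + 1) + 1 := by
        rw [hGG_def, Finset.card_insert_of_notMem hgenm, Finset.card_biUnion hdisj]
        have hsum : ∑ s ∈ Finset.Ico i e, (insert (gpt s) (W s)).card
            = ∑ _s ∈ Finset.Ico i e, (k+1) :=
          Finset.sum_congr rfl (fun s hs => by
            rw [Finset.mem_Ico] at hs
            exact hBcard s hs.1 hs.2)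
        rw [hsum, Finset.sum_const, Nat.card_Ico, smul_eq_mul]
      have hGGsub : GG ⊆ Gstar.filter (fun z => lo i < z ∧ z ≤ up e) := by
        intro z hz
        rw [hGG_def] at hz
        rcases Finset.mem_insert.mp hz with h | h
        · subst h
          refine Finset.mem_filter.mpr ⟨hgmem e, ?_, ?_⟩
          · exact lo_lt i (by omega) _ (gbnd e).1 (fun h1 =>
              lt_of_le_of_lt (rmono (i-1) (e-1) (by omega) (by omega)) (glow e (by omega) hem))
          · exact up_ge e hem _ (fun h2 => gle e h2) (gbnd e).2
        · obtain ⟨s, hs, hzB⟩ := Finset.mem_biUnion.mp h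
          rw [Finset.mem_Ico] at hs
          obtain ⟨hzG, hzlow, hz0, hzr⟩ := hBmem s hs.1 hs.2 z hzB
          refine Finset.mem_filter.mpr ⟨hzG, ?_, ?_⟩
          · exact lo_lt i (by omega) z hz0 (fun h1 =>
              lt_of_le_of_lt (rmono (i-1) (s-1) (by omega) (by omega)) (hzlow (by omega)))
          · refine up_ge e hem z (fun h2 => hzr.trans (rlmono s e hs.2 hem)) ?_
            exact hzr.trans (hrL s (by omega))
      have hGlb : (e - i) * (k + 1) + 1 ≤
          (Gstar.filter (fun z => lo i < z ∧ z ≤ up e)).card := by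
        rw [← hGGcard]
        exact Finset.card_le_card hGGsub
      have hloc := loc (lo i) (up e) (lo_le_L i (by omega)) (up_bounds e hem).1
        (up_bounds e hem).2
      have hSQ : S.filter (fun z => lo i < z ∧ z ≤ up e) ⊆ Qg.biUnion U := by
        intro z hz
        obtain ⟨hzS, hzP⟩ := Finset.mem_filter.mp hz
        obtain ⟨j0, _, hzU⟩ := Finset.mem_biUnion.mp hzS
        exact Finset.mem_biUnion.mpr ⟨j0,
          Finset.mem_filter.mpr ⟨Finset.mem_univ _, z, hzU, hzP⟩, hzU⟩
      have hScap : (S.filter (fun z => lo i < z ∧ z ≤ up e)).card ≤ Qg.card * (k - 1) := by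
        calc (S.filter (fun z => lo i < z ∧ z ≤ up e)).card
            ≤ (Qg.biUnion U).card := Finset.card_le_card hSQ
          _ ≤ ∑ j0 ∈ Qg, (U j0).card := Finset.card_biUnion_le
          _ ≤ Qg.card * (k-1) := by
              have := Finset.sum_le_card_nsmul Qg (fun j0 => (U j0).card) (k-1)
                (fun j0 _ => cap j0)
              simpa [smul_eq_mul] using this
      have hcomb : (e - i) * (k + 1) + 1 ≤ Qg.card * (k - 1) + 2 :=
        hGlb.trans (hloc.trans (Nat.add_le_add_right hScap 2))
      rcases Nat.eq_zero_or_pos (e - i) with hd0 | hdpos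
      · have hei : e = i := by omega
        subst hei
        have htok : jj e ∈ Qg := by
          refine Finset.mem_filter.mpr ⟨Finset.mem_univ _, vv e, hvU e, ?_, ?_⟩
          · exact lo_lt e (by omega) _ (vbnd e).1 (fun h1 => vlow e h1 (by omega))
          · exact up_ge e hem _ (fun h2 => vle e h2) (vbnd e).2
        have := Finset.card_pos.mpr ⟨jj e, htok⟩
        omega
      · by_contra hcon
        push_neg at hcon
        have hQle : Qg.card ≤ e - i := by omega
        have h5 : Qg.card * (k-1) ≤ (e-i) * (k-1) := Nat.mul_le_mul_right _ hQle
        have h6 : (e-i) * (k+1) + 1 ≤ (e-i) * (k-1) + 2 :=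
          le_trans hcomb (Nat.add_le_add_right h5 2)
        have h7 : (e-i) * (k+1) = (e-i) * (k-1) + 2 * (e-i) := by
          have hk1' : k + 1 = (k - 1) + 2 := by omega
          rw [hk1']
          ring
        rw [h7] at h6
        set A := (e - i) * (k - 1) with hA
        omega
    -- separation at a non-truncating step
    have sep : ∀ ii e, e < m → ¬ ((F e).card : ℝ) > T / tm →
        ∀ j0 : Fin m, (∃ pt ∈ U j0, lo ii < pt ∧ pt ≤ up e) →
          ¬ (∃ pt ∈ U j0, r e < pt) := by
      intro ii e hem hnt j0 hex1 hex2
      obtain ⟨pt1, h1U, _, h1le⟩ := hex1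
      obtain ⟨pt2, h2U, h2gt⟩ := hex2
      rw [up_lt e hem] at h1le
      have hre := r_eq e hem hnt
      have hc := hUcost j0
      have hmax : pt2 ≤ (U j0).max' (hUne j0) := Finset.le_max' _ _ h2U
      have hmin : (U j0).min' (hUne j0) ≤ pt1 := Finset.min'_le _ _ h1U
      have hcard : (1:ℝ) ≤ ((U j0).card : ℝ) := by
        have := Finset.card_pos.mpr (hUne j0)
        exact_mod_cast this
      have htmc : tm ≤ ((U j0).card : ℝ) * tm := le_mul_of_one_le_left htm.le hcard
      linarith
    -- the main induction
    have LEM : ∀ d ii, ii ≤ m → m - ii ≤ d →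
        m - ii + 1 ≤ (Finset.univ.filter
          (fun j0 : Fin m => ∃ pt ∈ U j0, lo ii < pt)).card := by
      have weaken : ∀ ii e, (Finset.univ.filter
          (fun j0 : Fin m => ∃ pt ∈ U j0, lo ii < pt ∧ pt ≤ up e)) ⊆
          (Finset.univ.filter (fun j0 : Fin m => ∃ pt ∈ U j0, lo ii < pt)) := by
        intro ii e j0 hj0
        obtain ⟨_, pt, hptU, hpt1, _⟩ := Finset.mem_filter.mp hj0
        exact Finset.mem_filter.mpr ⟨Finset.mem_univ _, pt, hptU, hpt1⟩
      intro d
      induction d with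
      | zero =>
        intro ii him hd
        have hiim : ii = m := by omega
        subst hiim
        have h1 := GB ii ii (le_refl _) him
          (fun s h1 h2 => absurd (h1.trans_lt h2) (lt_irrefl _))
        have h2 := Finset.card_le_card (weaken ii ii)
        omega
      | succ n ihn =>
        intro ii him hd
        by_cases hexE : ∃ e, ii ≤ e ∧ e < m ∧ ¬ ((F e).card : ℝ) > T / tm
        · have hspec := Nat.find_spec hexE
          set e := Nat.find hexE with he_def
          obtain ⟨hei, hem', hent⟩ := hspec
          have hmintr : ∀ s, ii ≤ s → s < e → ((F s).card : ℝ) > T / tm := by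
            intro s h1 h2
            by_contra hns
            exact absurd ⟨h1, by omega, hns⟩ (Nat.find_min hexE h2)
          have h1 := GB ii e hei (by omega) hmintr
          have h2 := ihn (e+1) (by omega) (by omega)
          set Q1 := Finset.univ.filter
            (fun j0 : Fin m => ∃ pt ∈ U j0, lo ii < pt ∧ pt ≤ up e) with hQ1
          set Q2 := Finset.univ.filter
            (fun j0 : Fin m => ∃ pt ∈ U j0, lo (e+1) < pt) with hQ2
          have hdisj : Disjoint Q1 Q2 := by
            rw [Finset.disjoint_left]
            intro j0 hj1 hj2
            obtain ⟨_, hex1⟩ := Finset.mem_filter.mp hj1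
            obtain ⟨_, hex2⟩ := Finset.mem_filter.mp hj2
            refine sep ii e hem' hent j0 hex1 ?_
            obtain ⟨pt, hptU, hpt⟩ := hex2
            rw [lo_succ] at hpt
            exact ⟨pt, hptU, hpt⟩
          have hsub : Q1 ∪ Q2 ⊆ Finset.univ.filter
              (fun j0 : Fin m => ∃ pt ∈ U j0, lo ii < pt) := by
            intro j0 hj
            rcases Finset.mem_union.mp hj with h | h
            · exact weaken ii e h
            · obtain ⟨_, pt, hptU, hpt⟩ := Finset.mem_filter.mp h
              rw [lo_succ] at hpt
              refine Finset.mem_filter.mpr ⟨Finset.mem_univ _, pt, hptU, ?_⟩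
              exact lt_of_le_of_lt (lo_le_r ii e (by omega) hem') hpt
          have hcardu := Finset.card_union_of_disjoint hdisj
          have hcardle := Finset.card_le_card hsub
          omega
        · have hall : ∀ s, ii ≤ s → s < m → ((F s).card : ℝ) > T / tm := by
            intro s h1 h2
            by_contra hns
            exact hexE ⟨s, h1, h2, hns⟩
          have h1 := GB ii m him (le_refl _) hall
          have h2 := Finset.card_le_card (weaken ii m)
          omega
    have hfin := LEM m 0 (Nat.zero_le m) (by omega)
    have hle := Finset.card_le_univ (Finset.univ.filter
      (fun j0 : Fin m => ∃ pt ∈ U j0, lo 0 < pt))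
    rw [Fintype.card_fin] at hle
    omega
end

section
/- If 3·t_m ≤ 2·T̂, then every path V_i produced by the street construction has cost at most 4·T̂, i.e. (max V_i − min V_i) + |V_i|·t_m ≤ 4·T̂. -/
lemma StreetData.lL {X : Type*} [Fintype X] [Nonempty X] (D : StreetData X) :
    ∀ i, i < D.m → D.l i ≤ D.L := by
  intro i
  induction i with
  | zero =>
    intro _
    obtain ⟨x, hx⟩ := D.hl0.1
    exact hx ▸ D.hbL x
  | succ j ih =>
    intro hj1
    have hj : j < D.m := Nat.lt_of_succ_lt hj1
    have hrL : D.r j ≤ D.L := by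
      by_cases hc : ((D.Gstar.filter (fun g => D.l j < g ∧ g < min (D.l j + D.T) D.L)).card : ℝ) > D.T / D.tm
      · obtain ⟨hWsub, _, _, hgr⟩ := D.hstep_trunc j hj hc
        have := hWsub hgr.1
        simp only [Finset.mem_filter] at this
        exact le_of_lt (lt_of_lt_of_le this.2.2 (min_le_right _ _))
      · obtain ⟨_, hreq⟩ := D.hstep_no_trunc j hj hc
        exact hreq ▸ min_le_right _ _
    by_cases hex : ∃ x, D.r j < D.a x
    · obtain ⟨x, _, hbx⟩ := (D.hlsucc_ex j hj hex).1
      exact hbx ▸ D.hbL x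
    · exact (D.hlsucc_nex j hj hex) ▸ hrL

/-- If `3 * tm ≤ 2 * T`, then every path `V i` produced by the street construction has
cost `(max V i − min V i) + |V i| * tm` at most `4 * T`. -/
theorem stmt12 {X : Type*} [Fintype X] [Nonempty X] (D : StreetData X)
    (h3 : 3 * D.tm ≤ 2 * D.T) :
    ∀ i < D.m, ∀ hne : (D.V i).Nonempty,
      (D.V i).max' hne - (D.V i).min' hne + (D.V i).card * D.tm ≤ 4 * D.T := by
  intro i hi hne
  have htm := D.htm
  have hT := D.hT
  have hlL : D.l i ≤ D.L := D.lL i hi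
  have hVi := D.hV i hi
  set F := D.Gstar.filter (fun g => D.l i < g ∧ g < min (D.l i + D.T) D.L) with hF
  -- establish: l i ≤ r i, r i ≤ l i + T, all v ∈ V i in [l i, r i], card bound
  have key : D.l i ≤ D.r i ∧ D.r i ≤ D.l i + D.T ∧
      (∀ v ∈ D.V i, D.l i ≤ v ∧ v ≤ D.r i) ∧
      ((D.V i).card : ℝ) ≤ D.T / D.tm + 2 := by
    by_cases hc : (F.card : ℝ) > D.T / D.tm
    · obtain ⟨hWsub, hWcard, _, hgr⟩ := D.hstep_trunc i hi hc
      have hrW : D.r i ∈ D.W i := hgr.1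
      have hrF := hWsub hrW
      simp only [hF, Finset.mem_filter] at hrF
      refine ⟨le_of_lt hrF.2.1, le_of_lt (lt_of_lt_of_le hrF.2.2 (min_le_left _ _)), ?_, ?_⟩
      · intro v hv
        rw [hVi] at hv
        simp only [Finset.mem_insert] at hv
        rcases hv with rfl | rfl | hv
        · exact ⟨le_refl _, le_of_lt hrF.2.1⟩
        · exact ⟨le_of_lt hrF.2.1, le_refl _⟩
        · have hvF := hWsub hv
          simp only [hF, Finset.mem_filter] at hvF
          exact ⟨le_of_lt hvF.2.1, hgr.2 hv⟩
      · have hins : insert (D.r i) (D.W i) = D.W i := Finset.insert_eq_self.2 hrW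
        rw [hVi, hins]
        have h1 : (insert (D.l i) (D.W i)).card ≤ (D.W i).card + 1 := Finset.card_insert_le _ _
        have h2 : ((D.W i).card : ℝ) ≤ D.T / D.tm + 1 := by
          rw [hWcard]
          have := Nat.ceil_lt_add_one (le_of_lt (div_pos hT htm))
          linarith
        calc ((insert (D.l i) (D.W i)).card : ℝ) ≤ (D.W i).card + 1 := by exact_mod_cast h1
          _ ≤ D.T / D.tm + 2 := by linarith
    · obtain ⟨hWeq, hreq⟩ := D.hstep_no_trunc i hi hc
      have hlr : D.l i ≤ D.r i := by
        rw [hreq]; exact le_min (by linarith) hlL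
      refine ⟨hlr, hreq ▸ min_le_left _ _, ?_, ?_⟩
      · intro v hv
        rw [hVi] at hv
        simp only [Finset.mem_insert] at hv
        rcases hv with rfl | rfl | hv
        · exact ⟨le_refl _, hlr⟩
        · exact ⟨hlr, le_refl _⟩
        · rw [hWeq] at hv
          simp only [hF, Finset.mem_filter] at hv
          exact ⟨le_of_lt hv.2.1, by rw [hreq]; exact le_of_lt hv.2.2⟩
      · push_neg at hc
        have h1 : (D.V i).card ≤ (D.W i).card + 2 := by
          rw [hVi]
          calc (insert (D.l i) (insert (D.r i) (D.W i))).card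
              ≤ (insert (D.r i) (D.W i)).card + 1 := Finset.card_insert_le _ _
            _ ≤ (D.W i).card + 1 + 1 := by
                have := Finset.card_insert_le (D.r i) (D.W i); omega
        have h2 : ((D.W i).card : ℝ) ≤ D.T / D.tm := hWeq ▸ hc
        calc ((D.V i).card : ℝ) ≤ (D.W i).card + 2 := by exact_mod_cast h1
          _ ≤ D.T / D.tm + 2 := by linarith
  obtain ⟨hlr, hrT, hmem, hcard⟩ := key
  have hmax : (D.V i).max' hne ≤ D.r i :=
    Finset.max'_le _ _ _ (fun v hv => (hmem v hv).2)
  have hmin : D.l i ≤ (D.V i).min' hne :=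
    Finset.le_min' _ _ _ (fun v hv => (hmem v hv).1)
  have hdiv : D.T / D.tm * D.tm = D.T := div_mul_cancel₀ _ (ne_of_gt htm)
  have hcard' : ((D.V i).card : ℝ) * D.tm ≤ D.T + 2 * D.tm := by
    have := mul_le_mul_of_nonneg_right hcard (le_of_lt htm)
    rw [add_mul, hdiv] at this
    linarith
  linarith
end

section
/- Suppose 3·t_m ≤ 2·T̂ and there exist m paths, each contained in [0, L] and each of cost at most T̂, that jointly see every target in X. Then the collection V_1, …, V_m produced by the street construction sees every target and each V_i has cost at most 4·T̂. (In particular, applied with T̂ equal to the optimal cost, the street construction is a 4-approximation algorithm for the m-watchmen problem on a chain-visible curve in a street polygon.) -/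
/-- Decomposition of `{0, …, m}` into maximal blocks separated by indices `w < m`
with `¬ Tr w`. -/
lemma exists_blocks (Tr : ℕ → Prop) (m : ℕ) :
    ∃ (s : ℕ) (fst lst : ℕ → ℕ),
      lst s = m ∧
      (∀ bk, bk ≤ s → fst bk ≤ lst bk ∧ lst bk ≤ m) ∧
      (∀ bk, bk ≤ s → ∀ w, fst bk ≤ w → w < lst bk → Tr w) ∧
      (∀ bk, bk < s → lst bk < m ∧ ¬ Tr (lst bk)) ∧
      (∀ bk bk', bk < bk' → bk' ≤ s → lst bk < fst bk') ∧
      (∑ bk ∈ Finset.range (s+1), (lst bk + 1 - fst bk) = m + 1) := by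
  classical
  set B : ℕ → ℕ := fun k => ((Finset.range k).filter (fun w => ¬ Tr w)).card with hB
  have B0 : B 0 = 0 := by simp [hB]
  have Bsucc : ∀ k, B (k+1) = if Tr k then B k else B k + 1 := by
    intro k
    simp only [hB, Finset.range_add_one, Finset.filter_insert]
    by_cases ht : Tr k
    · rw [if_neg (not_not_intro ht), if_pos ht]
    · rw [if_pos ht, if_neg ht, Finset.card_insert_of_notMem (by simp)]
  have Bmono : ∀ j k, j ≤ k → B j ≤ B k := by
    intro j k hjk
    exact Finset.card_le_card
      (Finset.filter_subset_filter _ (Finset.range_subset_range.mpr hjk))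
  have Bsurj : ∀ n c, c ≤ B n → ∃ k, k ≤ n ∧ B k = c := by
    intro n
    induction n with
    | zero =>
      intro c hc
      rw [B0] at hc
      exact ⟨0, le_refl _, by omega⟩
    | succ n ih =>
      intro c hc
      by_cases h : c ≤ B n
      · obtain ⟨k, hk1, hk2⟩ := ih c h
        exact ⟨k, by omega, hk2⟩
      · push_neg at h
        have hBs := Bsucc n
        refine ⟨n+1, le_refl _, ?_⟩
        by_cases ht : Tr n
        · rw [if_pos ht] at hBs; omega
        · rw [if_neg ht] at hBs; omega
  set s := B m with hs
  set Ev : ℕ → Finset ℕ := fun bk => (Finset.range (m+1)).filter (fun k => B k = bk)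
    with hEv
  have hEvne : ∀ bk, bk ≤ s → (Ev bk).Nonempty := by
    intro bk hbk
    obtain ⟨k, hk1, hk2⟩ := Bsurj m bk hbk
    exact ⟨k, Finset.mem_filter.mpr ⟨Finset.mem_range.mpr (by omega), hk2⟩⟩
  set fst : ℕ → ℕ := fun bk => if h : (Ev bk).Nonempty then (Ev bk).min' h else 0
    with hfst
  set lst : ℕ → ℕ := fun bk => if h : (Ev bk).Nonempty then (Ev bk).max' h else 0
    with hlst
  have hfst_mem : ∀ bk, bk ≤ s → fst bk ≤ m ∧ B (fst bk) = bk := by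
    intro bk hbk
    have h := hEvne bk hbk
    have hmem : fst bk ∈ Ev bk := by
      rw [hfst]; simp only [dif_pos h]; exact Finset.min'_mem _ h
    simp only [hEv, Finset.mem_filter, Finset.mem_range] at hmem
    exact ⟨by omega, hmem.2⟩
  have hlst_mem : ∀ bk, bk ≤ s → lst bk ≤ m ∧ B (lst bk) = bk := by
    intro bk hbk
    have h := hEvne bk hbk
    have hmem : lst bk ∈ Ev bk := by
      rw [hlst]; simp only [dif_pos h]; exact Finset.max'_mem _ h
    simp only [hEv, Finset.mem_filter, Finset.mem_range] at hmem
    exact ⟨by omega, hmem.2⟩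
  have hfst_min : ∀ bk, bk ≤ s → ∀ k, k ≤ m → B k = bk → fst bk ≤ k := by
    intro bk hbk k hk1 hk2
    have h := hEvne bk hbk
    have hkmem : k ∈ Ev bk := by
      simp only [hEv, Finset.mem_filter, Finset.mem_range]
      exact ⟨by omega, hk2⟩
    rw [hfst]; simp only [dif_pos h]
    exact Finset.min'_le _ _ hkmem
  have hlst_max : ∀ bk, bk ≤ s → ∀ k, k ≤ m → B k = bk → k ≤ lst bk := by
    intro bk hbk k hk1 hk2
    have h := hEvne bk hbk
    have hkmem : k ∈ Ev bk := by
      simp only [hEv, Finset.mem_filter, Finset.mem_range]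
      exact ⟨by omega, hk2⟩
    rw [hlst]; simp only [dif_pos h]
    exact Finset.le_max' _ _ hkmem
  have hfl : ∀ bk, bk ≤ s → fst bk ≤ lst bk := by
    intro bk hbk
    exact hfst_min bk hbk (lst bk) (hlst_mem bk hbk).1 (hlst_mem bk hbk).2
  have hfst0 : fst 0 = 0 := by
    have := hfst_min 0 (by omega) 0 (by omega) B0
    omega
  have hlsts : lst s = m := by
    have h1 := hlst_max s (le_refl _) m (le_refl _) rfl
    have h2 := (hlst_mem s (le_refl _)).1
    omega
  have hinner : ∀ bk, bk ≤ s → ∀ w, fst bk ≤ w → w < lst bk → Tr w := by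
    intro bk hbk w h1 h2
    have hw1 : B w = bk := by
      have a1 := Bmono (fst bk) w h1
      have a2 := Bmono w (lst bk) (by omega)
      have a3 := (hfst_mem bk hbk).2
      have a4 := (hlst_mem bk hbk).2
      omega
    have hw2 : B (w+1) = bk := by
      have a1 := Bmono (fst bk) (w+1) (by omega)
      have a2 := Bmono (w+1) (lst bk) (by omega)
      have a3 := (hfst_mem bk hbk).2
      have a4 := (hlst_mem bk hbk).2
      omega
    by_contra ht
    have := Bsucc w
    rw [if_neg ht] at this
    omega
  have hlstm : ∀ bk, bk < s → lst bk < m ∧ ¬ Tr (lst bk) := by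
    intro bk hbk
    have h1 := (hlst_mem bk (by omega)).1
    have h2 := (hlst_mem bk (by omega)).2
    have hlt : lst bk < m := by
      rcases Nat.eq_or_lt_of_le h1 with he | hl
      · exfalso; rw [he] at h2; omega
      · exact hl
    refine ⟨hlt, ?_⟩
    have hne' : B (lst bk + 1) ≠ bk := by
      intro hc
      have := hlst_max bk (by omega) (lst bk + 1) (by omega) hc
      omega
    intro ht
    have := Bsucc (lst bk)
    rw [if_pos ht] at this
    omega
  have hfstgt : ∀ bk bk', bk < bk' → bk' ≤ s → lst bk < fst bk' := by
    intro bk bk' h1 h2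
    by_contra hc
    push_neg at hc
    have a1 := Bmono (fst bk') (lst bk) hc
    have a2 := (hfst_mem bk' h2).2
    have a3 := (hlst_mem bk (by omega)).2
    omega
  have hfsteq : ∀ bk, bk < s → fst (bk+1) = lst bk + 1 := by
    intro bk hbk
    have h := hlstm bk hbk
    have hBs := Bsucc (lst bk)
    rw [if_neg h.2] at hBs
    have a3 := (hlst_mem bk (by omega)).2
    have h1 : fst (bk+1) ≤ lst bk + 1 := hfst_min (bk+1) (by omega) _ (by omega) (by omega)
    have h2 := hfstgt bk (bk+1) (by omega) (by omega)
    omega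
  have hsum : ∀ n, n ≤ s + 1 →
      ∑ bk ∈ Finset.range n, (lst bk + 1 - fst bk)
        = (if n = s + 1 then m + 1 else fst n) := by
    intro n
    induction n with
    | zero =>
      intro _
      rw [if_neg (by omega), Finset.sum_range_zero, hfst0]
    | succ n ih =>
      intro hn
      rw [Finset.sum_range_succ, ih (by omega), if_neg (by omega)]
      have hfln := hfl n (by omega)
      rcases Nat.eq_or_lt_of_le (show n ≤ s by omega) with he | hl
      · rw [if_pos (by omega)]
        subst he
        rw [hlsts]
        omega
      · rw [if_neg (by omega)]
        rw [hfsteq n hl]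
        omega
  refine ⟨s, fst, lst, hlsts, fun bk hbk => ⟨hfl bk hbk, (hlst_mem bk hbk).1⟩,
    hinner, hlstm, hfstgt, ?_⟩
  have := hsum (s+1) (le_refl _)
  rw [if_pos rfl] at this
  exact this

theorem stmt13' {X : Type*} [Fintype X] [Nonempty X]
    (a : X → ℝ) (b : X → ℝ) (hab : ∀ x, a x ≤ b x)
    (L : ℝ) (hL : 0 < L) (ha0 : ∀ x, 0 ≤ a x) (hbL : ∀ x, b x ≤ L)
    (tm : ℝ) (htm : 0 < tm) (T : ℝ) (hT : 0 < T) (m : ℕ) (hm : 1 ≤ m)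
    (G : Finset ℝ) (hGsub : ↑G ⊆ Set.Icc 0 L)
    (hGsees : ∀ x, ∃ v ∈ G, a x ≤ v ∧ v ≤ b x)
    (hGmin : ∀ S : Finset ℝ, ↑S ⊆ Set.Icc 0 L →
      (∀ x, ∃ v ∈ S, a x ≤ v ∧ v ≤ b x) → G.card ≤ S.card)
    (l : ℕ → ℝ) (r : ℕ → ℝ) (W : ℕ → Finset ℝ) (V : ℕ → Finset ℝ)
    (hl0 : IsLeast (Set.range b) (l 0))
    (hstepT : ∀ i < m,
      (((G.filter (fun g => l i < g ∧ g < min (l i + T) L)).card : ℝ) > T / tm →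
        W i ⊆ G.filter (fun g => l i < g ∧ g < min (l i + T) L) ∧
        (W i).card = ⌈T / tm⌉₊ ∧
        (∀ w ∈ W i, ∀ g ∈ G.filter (fun g => l i < g ∧ g < min (l i + T) L),
          g ≤ w → g ∈ W i) ∧
        IsGreatest (↑(W i) : Set ℝ) (r i)))
    (hstepN : ∀ i < m,
      (¬ ((G.filter (fun g => l i < g ∧ g < min (l i + T) L)).card : ℝ) > T / tm →
        W i = G.filter (fun g => l i < g ∧ g < min (l i + T) L) ∧
        r i = min (l i + T) L))
    (hV : ∀ i < m, V i = insert (l i) (insert (r i) (W i)))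
    (hex : ∀ i < m, (∃ x, r i < a x) →
      IsLeast {t : ℝ | ∃ x, r i < a x ∧ t = b x} (l (i + 1)))
    (hnex : ∀ i < m, (¬ ∃ x, r i < a x) → l (i + 1) = r i)
    (h3 : 3 * tm ≤ 2 * T)
    (U : Fin m → Finset ℝ) (hUne : ∀ i, (U i).Nonempty)
    (hUsub : ∀ i, ↑(U i) ⊆ Set.Icc 0 L)
    (hUcost : ∀ i, (U i).max' (hUne i) - (U i).min' (hUne i) + (U i).card * tm ≤ T)
    (hUsees : ∀ x : X, ∃ i, ∃ v ∈ U i, a x ≤ v ∧ v ≤ b x) :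
    (∀ x : X, ∃ i < m, ∃ v ∈ V i, a x ≤ v ∧ v ≤ b x) ∧
      ∀ i < m, ∀ hne : (V i).Nonempty,
        (V i).max' hne - (V i).min' hne + (V i).card * tm ≤ 4 * T := by
  classical
  -- the truncation predicate
  set Tr : ℕ → Prop := fun i =>
    ((G.filter (fun g => l i < g ∧ g < min (l i + T) L)).card : ℝ) > T / tm with hTr
  set K : ℕ := ⌈T / tm⌉₊ with hK
  have hTtm : (3:ℝ)/2 ≤ T / tm := by
    rw [le_div_iff₀ htm]; linarith
  have hKR : T / tm ≤ (K : ℝ) := Nat.le_ceil _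
  have hK2 : 2 ≤ K := by
    have : (1:ℝ) < K := lt_of_lt_of_le (by linarith) hKR
    have h1 : 1 < K := by exact_mod_cast this
    omega
  -- basic facts about l and r
  have basicA : ∀ i < m, l i ≤ L → l i ≤ r i ∧ r i ≤ L ∧ r i ≤ l i + T := by
    intro i hi hiL
    by_cases ht : Tr i
    · obtain ⟨hWsub, hWcard, hdown, hgr⟩ := hstepT i hi ht
      have hri := hWsub (Finset.mem_coe.mp hgr.1)
      simp only [Finset.mem_filter] at hri
      exact ⟨le_of_lt hri.2.1, le_of_lt (lt_of_lt_of_le hri.2.2 (min_le_right _ _)),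
        le_of_lt (lt_of_lt_of_le hri.2.2 (min_le_left _ _))⟩
    · obtain ⟨hWeq, hreq⟩ := hstepN i hi ht
      rw [hreq]
      exact ⟨le_min (by linarith) hiL, min_le_right _ _, min_le_left _ _⟩
  have lL : ∀ i, i < m → l i ≤ L := by
    intro i
    induction i with
    | zero =>
      intro _
      obtain ⟨x0, hx0⟩ := hl0.1
      exact hx0 ▸ hbL x0
    | succ k ih =>
      intro hk
      have hkm : k < m := by omega
      have hrk : r k ≤ L := (basicA k hkm (ih hkm)).2.1
      by_cases hc : ∃ x, r k < a x
      · obtain ⟨x, _, hx2⟩ := (hex k hkm hc).1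
        rw [hx2]; exact hbL x
      · rw [hnex k hkm hc]; exact hrk
  have lr : ∀ i < m, l i ≤ r i := fun i hi => (basicA i hi (lL i hi)).1
  have rL : ∀ i < m, r i ≤ L := fun i hi => (basicA i hi (lL i hi)).2.1
  have rlT : ∀ i < m, r i ≤ l i + T := fun i hi => (basicA i hi (lL i hi)).2.2
  have rl : ∀ i < m, r i ≤ l (i + 1) := by
    intro i hi
    by_cases hc : ∃ x, r i < a x
    · obtain ⟨x, hx1, hx2⟩ := (hex i hi hc).1
      rw [hx2]; exact le_trans (le_of_lt hx1) (hab x)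
    · rw [hnex i hi hc]
  have lmono : ∀ i j, i ≤ j → j < m → l i ≤ l j := by
    intro i j hij
    induction j with
    | zero =>
      intro _
      have : i = 0 := by omega
      rw [this]
    | succ k ih =>
      intro hk
      rcases Nat.lt_or_ge i (k+1) with h | h
      · have hkm : k < m := by omega
        exact le_trans (ih (by omega) hkm) (le_trans (lr k hkm) (rl k hkm))
      · have : i = k + 1 := by omega
        rw [this]
  have rmono : ∀ i j, i ≤ j → j < m → r i ≤ r j := by
    intro i j hij
    induction j with
    | zero =>
      intro _
      have : i = 0 := by omega
      rw [this]
    | succ k ih =>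
      intro hk
      rcases Nat.lt_or_ge i (k+1) with h | h
      · have hkm : k < m := by omega
        exact le_trans (ih (by omega) hkm) (le_trans (rl k hkm) (lr (k+1) hk))
      · have : i = k + 1 := by omega
        rw [this]
  -- elements of W i
  have hWmem : ∀ i < m, ∀ g ∈ W i, g ∈ G ∧ l i < g ∧ g ≤ r i := by
    intro i hi g hg
    by_cases ht : Tr i
    · obtain ⟨hWsub, hWcard, hdown, hgr⟩ := hstepT i hi ht
      have hgf := hWsub hg
      simp only [Finset.mem_filter] at hgf
      exact ⟨hgf.1, hgf.2.1, hgr.2 (Finset.mem_coe.mpr hg)⟩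
    · obtain ⟨hWeq, hreq⟩ := hstepN i hi ht
      rw [hWeq] at hg
      simp only [Finset.mem_filter] at hg
      exact ⟨hg.1, hg.2.1, hreq ▸ le_of_lt hg.2.2⟩
  -- Claim A : coverage within a window
  have claimA : ∀ i < m, ∀ x : X, l i ≤ b x → a x ≤ r i →
      ∃ v ∈ V i, a x ≤ v ∧ v ≤ b x := by
    intro i hi x hbx hax
    rw [hV i hi]
    by_cases h1 : a x ≤ l i
    · exact ⟨l i, Finset.mem_insert_self _ _, h1, hbx⟩
    push_neg at h1
    by_cases h2 : r i ≤ b x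
    · exact ⟨r i, Finset.mem_insert_of_mem (Finset.mem_insert_self _ _), hax, h2⟩
    push_neg at h2
    obtain ⟨g, hgG, hg1, hg2⟩ := hGsees x
    have hgr2 : g < r i := lt_of_le_of_lt hg2 h2
    have hgW : g ∈ W i := by
      by_cases ht : Tr i
      · obtain ⟨hWsub, hWcard, hdown, hgr⟩ := hstepT i hi ht
        have hriW : r i ∈ W i := Finset.mem_coe.mp hgr.1
        have hrif := hWsub hriW
        simp only [Finset.mem_filter] at hrif
        have hgf : g ∈ G.filter (fun g => l i < g ∧ g < min (l i + T) L) :=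
          Finset.mem_filter.mpr ⟨hgG, lt_of_lt_of_le h1 hg1, lt_trans hgr2 hrif.2.2⟩
        exact hdown (r i) hriW g hgf (le_of_lt hgr2)
      · obtain ⟨hWeq, hreq⟩ := hstepN i hi ht
        rw [hWeq]
        exact Finset.mem_filter.mpr ⟨hgG, lt_of_lt_of_le h1 hg1, hreq ▸ hgr2⟩
    exact ⟨g, Finset.mem_insert_of_mem (Finset.mem_insert_of_mem hgW), hg1, hg2⟩
  -- coverage up to r i
  have cov : ∀ i, i < m → ∀ x : X, a x ≤ r i → ∃ k < m, ∃ v ∈ V k, a x ≤ v ∧ v ≤ b x := by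
    intro i
    induction i with
    | zero =>
      intro h0 x hax
      exact ⟨0, h0, claimA 0 h0 x (hl0.2 (Set.mem_range_self x)) hax⟩
    | succ k ih =>
      intro hk x hax
      by_cases hc : a x ≤ r k
      · exact ih (by omega) x hc
      · push_neg at hc
        have hkm : k < m := by omega
        have hleast := hex k hkm ⟨x, hc⟩
        have hlb : l (k+1) ≤ b x := hleast.2 ⟨x, hc, rfl⟩
        exact ⟨k+1, hk, claimA (k+1) hk x hlb hax⟩
  constructor
  · -- coverage: by contradiction
    by_contra hcon
    push_neg at hcon
    obtain ⟨xs, hxs⟩ := hcon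
    have hxstar : r (m - 1) < a xs := by
      by_contra hc
      push_neg at hc
      obtain ⟨k, hk, v, hv, h1, h2⟩ := cov (m-1) (by omega) xs hc
      exact absurd h2 (not_le.mpr (hxs k hk v hv h1))
    have hrx : ∀ k < m, r k < a xs := fun k hk =>
      lt_of_le_of_lt (rmono k (m-1) (by omega) (by omega)) hxstar
    -- events
    have events : ∀ k : ℕ, ∃ (p : Fin m) (u : ℝ), u ∈ U p ∧ (k < m → u ≤ l k) ∧
        (1 ≤ k → k ≤ m → r (k-1) < u) := by
      intro k
      rcases Nat.eq_zero_or_pos k with h0 | h1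
      · subst h0
        obtain ⟨x0, hx0⟩ := hl0.1
        obtain ⟨p, u, hu, hu1, hu2⟩ := hUsees x0
        exact ⟨p, u, hu, fun _ => hx0 ▸ hu2, by omega⟩
      rcases Nat.lt_or_ge k m with hkm | hkm
      · have hk1m : k - 1 < m := by omega
        obtain ⟨x, hx1, hx2⟩ := (hex (k-1) hk1m ⟨xs, hrx (k-1) hk1m⟩).1
        have hkk : k - 1 + 1 = k := by omega
        rw [hkk] at hx2
        obtain ⟨p, u, hu, hu1, hu2⟩ := hUsees x
        exact ⟨p, u, hu, fun _ => hx2 ▸ hu2, fun _ _ => lt_of_lt_of_le hx1 hu1⟩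
      rcases Nat.eq_or_lt_of_le hkm with heq | hlt
      · subst heq
        obtain ⟨p, u, hu, hu1, hu2⟩ := hUsees xs
        exact ⟨p, u, hu, by omega, fun _ _ => lt_of_lt_of_le hxstar hu1⟩
      · obtain ⟨u, hu⟩ := hUne ⟨0, by omega⟩
        exact ⟨⟨0, by omega⟩, u, hu, by omega, by omega⟩
    choose pj uu huU hul hur using events
    have huA : ∀ k, uu k ∈ Finset.univ.biUnion U :=
      fun k => Finset.mem_biUnion.mpr ⟨pj k, Finset.mem_univ _, huU k⟩
    have umono : ∀ k k', k < k' → k' ≤ m → uu k < uu k' := by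
      intro k k' hkk hk'm
      have hkm : k < m := by omega
      calc uu k ≤ l k := hul k hkm
        _ ≤ r k := lr k hkm
        _ ≤ r (k'-1) := rmono k (k'-1) (by omega) (by omega)
        _ < uu k' := hur k' (by omega) hk'm
    -- block decomposition
    obtain ⟨s, fst, lst, hlsts, hfll, hinner, hlstm, hfstgt, hsum⟩ := exists_blocks Tr m
    set AllU : Finset ℝ := Finset.univ.biUnion U with hAllU
    have huA' : ∀ k, uu k ∈ AllU := fun k =>
      Finset.mem_biUnion.mpr ⟨pj k, Finset.mem_univ _, huU k⟩
    -- per-path capacity within any interval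
    have hcap : ∀ (c d : ℝ), ∀ p : Fin m,
        ((U p).filter (fun y => c ≤ y ∧ y ≤ d)).card ≤ K - 1 := by
      intro c d p
      set F := (U p).filter (fun y => c ≤ y ∧ y ≤ d) with hF
      rcases Nat.lt_or_ge F.card 2 with h | h
      · omega
      · obtain ⟨y1, hy1, y2, hy2, hne12⟩ := Finset.one_lt_card.mp h
        have hy1U : y1 ∈ U p := Finset.mem_of_mem_filter _ hy1
        have hy2U : y2 ∈ U p := Finset.mem_of_mem_filter _ hy2
        have hcard : F.card ≤ (U p).card := Finset.card_le_card (Finset.filter_subset _ _)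
        have hcost := hUcost p
        have hmin1 := Finset.min'_le (U p) _ hy1U
        have hmax2 := Finset.le_max' (U p) _ hy2U
        have hmin2 := Finset.min'_le (U p) _ hy2U
        have hmax1 := Finset.le_max' (U p) _ hy1U
        have hw : 0 < (U p).max' (hUne p) - (U p).min' (hUne p) := by
          rcases lt_or_gt_of_ne hne12 with h' | h'
          · linarith
          · linarith
        have hFR : (F.card : ℝ) ≤ ((U p).card : ℝ) := by exact_mod_cast hcard
        have h1 : (F.card : ℝ) * tm < T := by nlinarith
        have h2 : (F.card : ℝ) < T / tm := by
          rw [lt_div_iff₀ htm]; exact h1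
        have h3 : (F.card : ℝ) < (K : ℝ) := lt_of_lt_of_le h2 hKR
        have h4 : F.card < K := by exact_mod_cast h3
        omega
    -- swap lemma from minimality of G
    have hswap : ∀ c d : ℝ, c ∈ AllU → d ∈ AllU → c ≤ d →
        (G.filter (fun g => c < g ∧ g ≤ d)).card
          ≤ (AllU.filter (fun y => c ≤ y ∧ y ≤ d)).card := by
      intro c d hcA hdA hcd
      have hcS : c ∈ (G \ G.filter (fun g => c < g ∧ g ≤ d))
          ∪ AllU.filter (fun y => c ≤ y ∧ y ≤ d) :=
        Finset.mem_union_right _ (Finset.mem_filter.mpr ⟨hcA, le_refl _, hcd⟩)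
      have hdS : d ∈ (G \ G.filter (fun g => c < g ∧ g ≤ d))
          ∪ AllU.filter (fun y => c ≤ y ∧ y ≤ d) :=
        Finset.mem_union_right _ (Finset.mem_filter.mpr ⟨hdA, hcd, le_refl _⟩)
      have hSsub : ↑((G \ G.filter (fun g => c < g ∧ g ≤ d))
          ∪ AllU.filter (fun y => c ≤ y ∧ y ≤ d)) ⊆ Set.Icc 0 L := by
        intro y hy
        simp only [Finset.coe_union, Set.mem_union, Finset.mem_coe] at hy
        rcases hy with hyG | hyA
        · exact hGsub (Finset.mem_coe.mpr (Finset.mem_sdiff.mp hyG).1)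
        · obtain ⟨p, -, hp⟩ := Finset.mem_biUnion.mp (Finset.mem_filter.mp hyA).1
          exact hUsub p hp
      have hSsees : ∀ x, ∃ v ∈ (G \ G.filter (fun g => c < g ∧ g ≤ d))
          ∪ AllU.filter (fun y => c ≤ y ∧ y ≤ d), a x ≤ v ∧ v ≤ b x := by
        intro x
        obtain ⟨g, hgG, hg1, hg2⟩ := hGsees x
        by_cases hgio : c < g ∧ g ≤ d
        · obtain ⟨p, u0, hu0, ha0', hb0'⟩ := hUsees x
          have hu0A : u0 ∈ AllU := Finset.mem_biUnion.mpr ⟨p, Finset.mem_univ _, hu0⟩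
          rcases lt_or_ge u0 c with hlt | hge
          · exact ⟨c, hcS, le_of_lt (lt_of_le_of_lt ha0' hlt),
              le_trans (le_of_lt hgio.1) hg2⟩
          rcases le_or_gt u0 d with hled | hgtd
          · refine ⟨u0, ?_, ha0', hb0'⟩
            exact Finset.mem_union_right _ (Finset.mem_filter.mpr ⟨hu0A, hge, hled⟩)
          · exact ⟨d, hdS, le_trans hg1 hgio.2, le_trans (le_of_lt hgtd) hb0'⟩
        · refine ⟨g, ?_, hg1, hg2⟩
          refine Finset.mem_union_left _ (Finset.mem_sdiff.mpr ⟨hgG, fun hmem => hgio ?_⟩)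
          exact (Finset.mem_filter.mp hmem).2
      have hmin' := hGmin _ hSsub hSsees
      have hc1 : ((G \ G.filter (fun g => c < g ∧ g ≤ d))
          ∪ AllU.filter (fun y => c ≤ y ∧ y ≤ d)).card
          ≤ (G \ G.filter (fun g => c < g ∧ g ≤ d)).card
            + (AllU.filter (fun y => c ≤ y ∧ y ≤ d)).card :=
        Finset.card_union_le _ _
      have hc2 : (G \ G.filter (fun g => c < g ∧ g ≤ d)).card
          = G.card - (G.filter (fun g => c < g ∧ g ≤ d)).card :=
        Finset.card_sdiff_of_subset (Finset.filter_subset _ _)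
      have hc3 : (G.filter (fun g => c < g ∧ g ≤ d)).card ≤ G.card :=
        Finset.card_le_card (Finset.filter_subset _ _)
      omega
    -- the collections of paths associated with each block
    set Pb : ℕ → Finset (Fin m) := fun bk => Finset.univ.filter
      (fun p => ∃ u' ∈ U p, uu (fst bk) ≤ u' ∧ u' ≤ uu (lst bk)) with hPb
    -- paths meeting two distinct blocks are impossible
    have hPdisj : ∀ bk bk', bk < bk' → bk' ≤ s → Disjoint (Pb bk) (Pb bk') := by
      intro bk bk' hbb hb's
      rw [Finset.disjoint_left]
      intro p hp hp'
      simp only [hPb, Finset.mem_filter] at hp hp'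
      obtain ⟨-, u1, hu1U, -, hu1le⟩ := hp
      obtain ⟨-, u2, hu2U, hu2ge, -⟩ := hp'
      have hbs : bk ≤ s := by omega
      obtain ⟨hwm, hwnt⟩ := hlstm bk (by omega)
      have hrw : r (lst bk) = l (lst bk) + T := by
        have hreq := (hstepN (lst bk) hwm hwnt).2
        have hrLa : r (lst bk) < a xs := hrx (lst bk) hwm
        have haL : a xs ≤ L := le_trans (hab xs) (hbL xs)
        rcases min_cases (l (lst bk) + T) L with ⟨h1, h2⟩ | ⟨h1, h2⟩
        · rw [hreq, h1]
        · exfalso; rw [hreq, h1] at hrLa; linarith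
      have h1 : u1 ≤ l (lst bk) := le_trans hu1le (hul (lst bk) hwm)
      have hflgt := hfstgt bk bk' hbb hb's
      have hfb' : 1 ≤ fst bk' := by omega
      have hfb'm : fst bk' ≤ m := le_trans (hfll bk' hb's).1 (hfll bk' hb's).2
      have h2 : r (lst bk) < u2 := by
        have h3 : r (lst bk) ≤ r (fst bk' - 1) := rmono _ _ (by omega) (by omega)
        exact lt_of_le_of_lt h3 (lt_of_lt_of_le (hur (fst bk') hfb' hfb'm) hu2ge)
      have hcost := hUcost p
      have hmin1 := Finset.min'_le (U p) _ hu1U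
      have hmax2 := Finset.le_max' (U p) _ hu2U
      have hc1 : 1 ≤ (U p).card := Finset.card_pos.mpr (hUne p)
      have hc1R : (1:ℝ) ≤ ((U p).card : ℝ) := by exact_mod_cast hc1
      nlinarith
    -- lower bound : the truncated windows inside a block
    have hlow : ∀ bk, bk ≤ s → fst bk < lst bk →
        (lst bk - fst bk) * K ≤
          (G.filter (fun g => uu (fst bk) < g ∧ g ≤ uu (lst bk))).card := by
      intro bk hbs hfl'
      have hlstmm : lst bk ≤ m := (hfll bk hbs).2
      have hsub : (Finset.Ico (fst bk) (lst bk)).biUnion W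
          ⊆ G.filter (fun g => uu (fst bk) < g ∧ g ≤ uu (lst bk)) := by
        intro g hg
        obtain ⟨w, hw, hgW⟩ := Finset.mem_biUnion.mp hg
        simp only [Finset.mem_Ico] at hw
        have hwm : w < m := by omega
        obtain ⟨hgG, hgl, hgr⟩ := hWmem w hwm g hgW
        refine Finset.mem_filter.mpr ⟨hgG, ?_, ?_⟩
        · calc uu (fst bk) ≤ l (fst bk) := hul (fst bk) (by omega)
            _ ≤ l w := lmono _ _ hw.1 hwm
            _ < g := hgl
        · have : g ≤ r (lst bk - 1) := le_trans hgr (rmono _ _ (by omega) (by omega))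
          exact le_of_lt (lt_of_le_of_lt this (hur (lst bk) (by omega) hlstmm))
      have hdisj : ∀ w ∈ Finset.Ico (fst bk) (lst bk), ∀ w' ∈ Finset.Ico (fst bk) (lst bk),
          w ≠ w' → Disjoint (W w) (W w') := by
        have key : ∀ w w', fst bk ≤ w → w < w' → w' < lst bk → Disjoint (W w) (W w') := by
          intro w w' hw hww' hw'
          rw [Finset.disjoint_left]
          intro g hgW hgW'
          have hwm : w < m := by omega
          have hw'm : w' < m := by omega
          have h1 : g ≤ r w := (hWmem w hwm g hgW).2.2
          have h2 : l w' < g := (hWmem w' hw'm g hgW').2.1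
          have h3 : r w ≤ l w' :=
            le_trans (rl w hwm) (lmono (w+1) w' (by omega) hw'm)
          linarith
        intro w hw w' hw' hne'
        simp only [Finset.mem_Ico] at hw hw'
        rcases Nat.lt_or_ge w w' with h | h
        · exact key w w' hw.1 h hw'.2
        · exact (key w' w hw'.1 (by omega) hw.2).symm
      calc (lst bk - fst bk) * K
          = ∑ w ∈ Finset.Ico (fst bk) (lst bk), K := by
            rw [Finset.sum_const, Nat.card_Ico, smul_eq_mul]
        _ = ∑ w ∈ Finset.Ico (fst bk) (lst bk), (W w).card := by
            apply Finset.sum_congr rfl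
            intro w hw
            simp only [Finset.mem_Ico] at hw
            have hwm : w < m := by omega
            exact ((hstepT w hwm (hinner bk hbs w hw.1 hw.2)).2.1).symm
        _ = ((Finset.Ico (fst bk) (lst bk)).biUnion W).card :=
            (Finset.card_biUnion hdisj).symm
        _ ≤ _ := Finset.card_le_card hsub
    -- upper bound : capacity of the paths of a block
    have hup : ∀ bk, bk ≤ s →
        (AllU.filter (fun y => uu (fst bk) ≤ y ∧ y ≤ uu (lst bk))).card
          ≤ (Pb bk).card * (K-1) := by
      intro bk hbs
      have hsub : AllU.filter (fun y => uu (fst bk) ≤ y ∧ y ≤ uu (lst bk))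
          ⊆ (Pb bk).biUnion
            (fun p => (U p).filter (fun y => uu (fst bk) ≤ y ∧ y ≤ uu (lst bk))) := by
        intro y hy
        simp only [Finset.mem_filter] at hy
        obtain ⟨hyA, hy1, hy2⟩ := hy
        obtain ⟨p, -, hp⟩ := Finset.mem_biUnion.mp hyA
        refine Finset.mem_biUnion.mpr ⟨p, ?_, Finset.mem_filter.mpr ⟨hp, hy1, hy2⟩⟩
        rw [hPb]
        exact Finset.mem_filter.mpr ⟨Finset.mem_univ _, y, hp, hy1, hy2⟩
      calc (AllU.filter (fun y => uu (fst bk) ≤ y ∧ y ≤ uu (lst bk))).card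
          ≤ ((Pb bk).biUnion
            (fun p => (U p).filter (fun y => uu (fst bk) ≤ y ∧ y ≤ uu (lst bk)))).card :=
            Finset.card_le_card hsub
        _ ≤ ∑ p ∈ Pb bk,
            ((U p).filter (fun y => uu (fst bk) ≤ y ∧ y ≤ uu (lst bk))).card :=
            Finset.card_biUnion_le
        _ ≤ ∑ p ∈ Pb bk, (K-1) :=
            Finset.sum_le_sum (fun p _ => hcap _ _ p)
        _ = (Pb bk).card * (K-1) := by rw [Finset.sum_const, smul_eq_mul]
    -- each block needs strictly more paths than its truncated windows
    have hPcard : ∀ bk, bk ≤ s → lst bk + 1 - fst bk ≤ (Pb bk).card := by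
      intro bk hbs
      have hflb := (hfll bk hbs).1
      have hlm := (hfll bk hbs).2
      have hne1 : (Pb bk).Nonempty := by
        refine ⟨pj (fst bk), ?_⟩
        rw [hPb]
        refine Finset.mem_filter.mpr ⟨Finset.mem_univ _, uu (fst bk), huU _, le_refl _, ?_⟩
        rcases Nat.eq_or_lt_of_le hflb with he | hl
        · rw [he]
        · exact le_of_lt (umono _ _ hl hlm)
      rcases Nat.eq_or_lt_of_le hflb with he | hl
      · rw [← he]
        have := Finset.card_pos.mpr hne1
        omega
      · have h1 := hlow bk hbs hl
        have h2 := hswap (uu (fst bk)) (uu (lst bk)) (huA' _) (huA' _)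
          (le_of_lt (umono _ _ hl hlm))
        have h3 := hup bk hbs
        have h4 : (lst bk - fst bk) * K ≤ (Pb bk).card * (K-1) :=
          le_trans h1 (le_trans h2 h3)
        by_contra hcon'
        push_neg at hcon'
        have h5 : (Pb bk).card ≤ lst bk - fst bk := by omega
        have h6 : (Pb bk).card * (K-1) ≤ (lst bk - fst bk) * (K-1) :=
          Nat.mul_le_mul_right _ h5
        have h7 : (lst bk - fst bk) * (K-1) < (lst bk - fst bk) * K :=
          Nat.mul_lt_mul_of_pos_left (by omega) (by omega)
        omega
    -- final counting
    have hfin1 : ∑ bk ∈ Finset.range (s+1), (lst bk + 1 - fst bk)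
        ≤ ∑ bk ∈ Finset.range (s+1), (Pb bk).card :=
      Finset.sum_le_sum (fun bk hbk =>
        hPcard bk (by simpa using Nat.lt_succ_iff.mp (Finset.mem_range.mp hbk)))
    have hfin2 : ∑ bk ∈ Finset.range (s+1), (Pb bk).card
        = ((Finset.range (s+1)).biUnion Pb).card := by
      symm
      apply Finset.card_biUnion
      intro bk hbk bk' hbk' hne'
      simp only [Finset.mem_coe, Finset.mem_range] at hbk hbk'
      rcases Nat.lt_or_ge bk bk' with h | h
      · exact hPdisj bk bk' h (by omega)
      · exact (hPdisj bk' bk (by omega) (by omega)).symm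
    have hfin3 : ((Finset.range (s+1)).biUnion Pb).card ≤ m := by
      have := Finset.card_le_card (Finset.subset_univ ((Finset.range (s+1)).biUnion Pb))
      simpa using this
    omega

  · -- cost bound
    intro i hi hne
    have hVi := hV i hi
    have hliL := lL i hi
    have hlri := lr i hi
    have hrlTi := rlT i hi
    have hcard : (V i).card ≤ (W i).card + 2 := by
      rw [hVi]
      have c1 := Finset.card_insert_le (l i) (insert (r i) (W i))
      have c2 := Finset.card_insert_le (r i) (W i)
      omega
    have hmax : (V i).max' hne ≤ r i := by
      apply Finset.max'_le
      intro y hy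
      rw [hVi] at hy
      simp only [Finset.mem_insert] at hy
      rcases hy with h | h | h
      · rw [h]; exact hlri
      · rw [h]
      · exact (hWmem i hi y h).2.2
    have hmin : l i ≤ (V i).min' hne := by
      apply Finset.le_min'
      intro y hy
      rw [hVi] at hy
      simp only [Finset.mem_insert] at hy
      rcases hy with h | h | h
      · rw [h]
      · rw [h]; exact hlri
      · exact le_of_lt (hWmem i hi y h).2.1
    have hWc : ((W i).card : ℝ) * tm ≤ T + tm := by
      by_cases ht : Tr i
      · have hc := (hstepT i hi ht).2.1
        rw [hc]
        have h1 : (K : ℝ) < T / tm + 1 := Nat.ceil_lt_add_one (by positivity)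
        have h2 : (T / tm) * tm = T := div_mul_cancel₀ T (ne_of_gt htm)
        nlinarith
      · have h1 : ¬ ((W i).card : ℝ) > T / tm := by rw [(hstepN i hi ht).1]; exact ht
        push_neg at h1
        have h2 : (T / tm) * tm = T := div_mul_cancel₀ T (ne_of_gt htm)
        nlinarith
    have hcR : ((V i).card : ℝ) ≤ ((W i).card : ℝ) + 2 := by exact_mod_cast hcard
    have h5 : ((V i).card : ℝ) * tm ≤ (((W i).card : ℝ) + 2) * tm :=
      mul_le_mul_of_nonneg_right hcR (le_of_lt htm)
    nlinarith

/-- If `3 * tm ≤ 2 * T` and there exist `m` paths in `[0, L]`, each of cost at most `T`,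
jointly seeing every target, then the collection `V 1, …, V m` produced by the street
construction sees every target and each `V i` has cost at most `4 * T`: the street
construction is a 4-approximation for the m-watchmen problem on a chain-visible curve. -/
theorem stmt13 {X : Type*} [Fintype X] [Nonempty X] (D : StreetData X)
    (h3 : 3 * D.tm ≤ 2 * D.T)
    (U : Fin D.m → Finset ℝ) (hUne : ∀ i, (U i).Nonempty)
    (hUsub : ∀ i, ↑(U i) ⊆ Set.Icc 0 D.L)
    (hUcost : ∀ i, (U i).max' (hUne i) - (U i).min' (hUne i) + (U i).card * D.tm ≤ D.T)
    (hUsees : ∀ x : X, ∃ i, ∃ v ∈ U i, D.a x ≤ v ∧ v ≤ D.b x) :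
    (∀ x : X, ∃ i < D.m, ∃ v ∈ D.V i, D.a x ≤ v ∧ v ≤ D.b x) ∧
      ∀ i < D.m, ∀ hne : (D.V i).Nonempty,
        (D.V i).max' hne - (D.V i).min' hne + (D.V i).card * D.tm ≤ 4 * D.T := by
  obtain ⟨a, b, hab, L, hL, ha0, hbL, tm, htm, T, hT, m, hm, G, hGsub, hGsees, hGmin,
    l, r, W, V, hl0, hstepT, hstepN, hV, hex, hnex⟩ := D
  exact stmt13' a b hab L hL ha0 hbL tm htm T hT m hm G hGsub hGsees hGmin l r W V hl0
    hstepT hstepN hV hex hnex h3 U hUne hUsub hUcost hUsees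
end

section
/- Let f : ℝ → ℝ be any function, let P = {p ∈ ℝ × ℝ : f(p.1) ≤ p.2} be the region on or above the terrain graph, let h ∈ ℝ be a fixed altitude, and let x ∈ P be a point with x.2 ≤ h. Then the set {u ∈ ℝ : the segment joining (u, h) to x is contained in P} is order-connected, i.e. an interval of ℝ. (A fixed-altitude path over a 1.5D terrain is chain-visible for any set of points on the terrain.) -/
private lemma aux14 (f : ℝ → ℝ) (h : ℝ) (x : ℝ × ℝ)
    (hxh : x.2 ≤ h) (c b t : ℝ)
    (hc : segment ℝ (c, h) x ⊆ {p : ℝ × ℝ | f p.1 ≤ p.2})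
    (hb1 : x.1 ≤ b) (hb2 : b ≤ c) (ht0 : 0 ≤ t) (ht1 : t ≤ 1) :
    f ((1-t)*b + t*x.1) ≤ (1-t)*h + t*x.2 := by
  rcases eq_or_lt_of_le (hb1.trans hb2) with hd | hd
  · have hb : b = x.1 := le_antisymm (hb2.trans hd.symm.le) hb1
    have hxP : f x.1 ≤ x.2 := hc (right_mem_segment ℝ _ _)
    have harg : (1-t)*b + t*x.1 = x.1 := by rw [hb]; ring
    rw [harg]
    nlinarith
  · set d := c - x.1 with hdd
    have hd0 : 0 < d := by simp only [hdd]; linarith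
    set s := t + (1-t)*(c-b)/d with hs
    clear_value d s
    have e : (1-s)*d = (1-t)*(b-x.1) := by
      rw [hs, hdd]; field_simp [sub_ne_zero.mpr (ne_of_gt hd)]; ring
    have hs0 : 0 ≤ s := by
      have h0 : 0 ≤ (1-t)*(c-b)/d := div_nonneg (by nlinarith) hd0.le
      linarith
    have hsle : s ≤ 1 := by
      have h1 : 0 ≤ (1-t)*(b-x.1) := by nlinarith
      nlinarith
    have hmem : ((1-s)*c + s*x.1, (1-s)*h + s*x.2) ∈ segment ℝ (c, h) x := by
      refine ⟨1-s, s, by linarith, hs0, by ring, ?_⟩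
      ext
      · simp [Prod.smul_fst]
      · simp [Prod.smul_snd]
    have fP := hc hmem
    simp only [Set.mem_setOf_eq] at fP
    have h1 : (1-s)*c + s*x.1 = (1-t)*b + t*x.1 := by linear_combination e - (1-s)*hdd
    rw [h1] at fP
    have hst : t ≤ s := by nlinarith
    nlinarith

/-- A fixed-altitude path over a 1.5D terrain is chain-visible: for any terrain
function `f`, region `P = {p : f p.1 ≤ p.2}` on or above the terrain graph, altitude
`h`, and point `x ∈ P` with `x.2 ≤ h`, the set of abscissae `u` such that the segment
from `(u, h)` to `x` is contained in `P` is order-connected (an interval of ℝ). -/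
theorem stmt14 (f : ℝ → ℝ) (h : ℝ) (x : ℝ × ℝ)
    (hx : x ∈ {p : ℝ × ℝ | f p.1 ≤ p.2}) (hxh : x.2 ≤ h) :
    Set.OrdConnected
      {u : ℝ | segment ℝ (u, h) x ⊆ {p : ℝ × ℝ | f p.1 ≤ p.2}} := by
  constructor
  intro a ha c hc b hb
  simp only [Set.mem_setOf_eq] at ha hc ⊢
  intro q hq
  obtain ⟨t1, t2, ht1, ht2, hsum, heq⟩ := hq
  have hq1 : q.1 = t1*b + t2*x.1 := by
    rw [← heq]; simp [Prod.smul_fst]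
  have hq2 : q.2 = t1*h + t2*x.2 := by
    rw [← heq]; simp [Prod.smul_snd]
  have ht11 : t1 = 1 - t2 := by linarith
  rcases le_total x.1 b with hbx | hbx
  · have := aux14 f h x hxh c b t2 hc hbx hb.2 ht2 (by linarith)
    simp only [Set.mem_setOf_eq, hq1, hq2, ht11]
    linarith [this]
  · -- mirror: use a, with reflection u ↦ -u
    have hc' : segment ℝ ((-a : ℝ), h) ((-x.1, x.2) : ℝ × ℝ) ⊆
        {p : ℝ × ℝ | f (-p.1) ≤ p.2} := by
      rintro p ⟨u, v, hu, hv, huv, hp⟩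
      have : ((-p.1, p.2) : ℝ × ℝ) ∈ segment ℝ (a, h) x := by
        refine ⟨u, v, hu, hv, huv, ?_⟩
        have h1 : u * (-a) + v * (-x.1) = p.1 := by
          rw [← hp]; simp [Prod.smul_fst]
        have h2 : u * h + v * x.2 = p.2 := by
          rw [← hp]; simp [Prod.smul_snd]
        ext
        · simp [Prod.smul_fst]; linarith
        · simpa [Prod.smul_snd] using h2
      exact ha this
    have := aux14 (fun u => f (-u)) h ((-x.1, x.2) : ℝ × ℝ) hxh (-a) (-b) t2 hc'
      (by simpa using hbx) (by simpa using hb.1) ht2 (by linarith)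
    simp only [Set.mem_setOf_eq] at this
    have harg : -((1-t2)*(-b) + t2*(-x.1)) = q.1 := by rw [hq1, ht11]; ring
    rw [harg] at this
    simp only [Set.mem_setOf_eq, hq2, ht11]
    linarith [this]
end

section
/- Let P be a compact subset of the plane ℝ × ℝ whose complement is connected (a model of a polygon without holes). If a, b, c are points such that the three segments joining a to b, b to c, and c to a are all contained in P, then the convex hull of {a, b, c} is contained in P. -/
open Set
/-- In a compact subset `P` of the plane with connected complement (a model of a polygon
without holes), if the three segments joining `a`, `b`, `c` pairwise are contained in
`P`, then the whole triangle (convex hull of `{a, b, c}`) is contained in `P`. -/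
theorem stmt15 (P : Set (ℝ × ℝ)) (hP : IsCompact P) (hconn : IsConnected Pᶜ)
    (a b c : ℝ × ℝ) (hab : segment ℝ a b ⊆ P) (hbc : segment ℝ b c ⊆ P)
    (hca : segment ℝ c a ⊆ P) :
    convexHull ℝ ({a, b, c} : Set (ℝ × ℝ)) ⊆ P := by
  classical
  set T : Set (ℝ × ℝ) := convexHull ℝ ({a, b, c} : Set (ℝ × ℝ)) with hTdef
  set E : Set (ℝ × ℝ) := segment ℝ a b ∪ segment ℝ b c ∪ segment ℝ c a with hEdef
  have hEP : E ⊆ P := by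
    intro z hz
    rcases hz with (h | h) | h
    · exact hab h
    · exact hbc h
    · exact hca h
  by_cases hcol : Collinear ℝ ({a, b, c} : Set (ℝ × ℝ))
  · rcases hcol.wbtw_or_wbtw_or_wbtw with h | h | h
    · refine (convexHull_min ?_ (convex_segment a c)).trans (by rw [segment_symm]; exact hca)
      rw [Set.insert_subset_iff, Set.insert_subset_iff, Set.singleton_subset_iff]
      exact ⟨left_mem_segment ℝ a c, h.mem_segment, right_mem_segment ℝ a c⟩
    · refine (convexHull_min ?_ (convex_segment b a)).trans (by rw [segment_symm]; exact hab)
      rw [Set.insert_subset_iff, Set.insert_subset_iff, Set.singleton_subset_iff]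
      exact ⟨right_mem_segment ℝ b a, left_mem_segment ℝ b a, h.mem_segment⟩
    · refine (convexHull_min ?_ (convex_segment c b)).trans (by rw [segment_symm]; exact hbc)
      rw [Set.insert_subset_iff, Set.insert_subset_iff, Set.singleton_subset_iff]
      exact ⟨h.mem_segment, right_mem_segment ℝ c b, left_mem_segment ℝ c b⟩
  · -- non-collinear case
    have hconvT : Convex ℝ T := convex_convexHull ℝ _
    have hTop : affineSpan ℝ ({a, b, c} : Set (ℝ × ℝ)) = ⊤ := by
      by_contra htop
      apply hcol
      rw [collinear_iff_finrank_le_one]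
      by_contra hle
      push_neg at hle
      have h2 : 2 ≤ Module.finrank ℝ (vectorSpan ℝ ({a, b, c} : Set (ℝ × ℝ))) := hle
      have hvtop : vectorSpan ℝ ({a, b, c} : Set (ℝ × ℝ)) = ⊤ := by
        apply Submodule.eq_top_of_finrank_eq
        have hle' := Submodule.finrank_le (vectorSpan ℝ ({a, b, c} : Set (ℝ × ℝ)))
        have : Module.finrank ℝ (ℝ × ℝ) = 2 := by simp
        omega
      rw [AffineSubspace.affineSpan_eq_top_iff_vectorSpan_eq_top_of_nonempty ℝ (ℝ × ℝ) (ℝ × ℝ)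
        ⟨a, by simp⟩] at htop
      exact htop hvtop
    have hint : (interior T).Nonempty := by
      rw [hTdef, interior_convexHull_nonempty_iff_affineSpan_eq_top]
      exact hTop
    obtain ⟨w, hw⟩ := hint
    -- decomposition of a point of T
    have hdecomp : ∀ x ∈ T, ∃ z ∈ segment ℝ b c, x ∈ segment ℝ a z := by
      intro x hx
      rw [hTdef, show ({a, b, c} : Set (ℝ × ℝ)) = insert a {b, c} from rfl,
        convexHull_insert ⟨b, by simp⟩, convexHull_pair, mem_convexJoin] at hx
      obtain ⟨p, hp, z, hz, hxz⟩ := hx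
      rw [mem_singleton_iff] at hp
      subst hp
      exact ⟨z, hz, hxz⟩
    -- key: points of T not in the interior lie on the edges
    have key : ∀ x ∈ T, x ∉ interior T → x ∈ E := by
      intro x hxT hxI
      obtain ⟨f, hf⟩ := geometric_hahn_banach_open_point hconvT.interior isOpen_interior hxI
      set r : ℝ := f x with hr
      -- f ≤ r on T
      have hle : ∀ v ∈ T, f v ≤ r := by
        intro v hv
        by_contra h
        push_neg at h
        have hw' : f w < r := hf w hw
        have hvw : 0 < f v - f w := by linarith
        set ε : ℝ := (f v - r) / (2 * (f v - f w)) with hε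
        have hε0 : 0 < ε := div_pos (by linarith) (by linarith)
        have hε1 : ε < 1 := by
          rw [hε, div_lt_one (by linarith)]
          linarith
        have hmem : ε • w + (1 - ε) • v ∈ interior T :=
          hconvT.combo_interior_closure_mem_interior hw (subset_closure hv) hε0
            (by linarith) (by ring)
        have hlt := hf _ hmem
        rw [map_add, map_smul, map_smul, smul_eq_mul, smul_eq_mul] at hlt
        have hεval : ε * (f v - f w) = (f v - r) / 2 := by
          rw [hε]; field_simp
        nlinarith [hlt, hεval]
      obtain ⟨z, hz, hxz⟩ := hdecomp x hxT
      obtain ⟨s, t, hs, ht, hst, hzval⟩ := hz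
      obtain ⟨α, β, hα, hβ, hαβ, hxval⟩ := hxz
      rcases eq_or_lt_of_le hβ with hβ0 | hβpos
      · -- β = 0 → x = a
        have hxa : x = a := by
          rw [← hxval, ← hβ0]
          have : α = 1 := by linarith
          simp [this, ← hβ0]
        rw [hEdef]
        exact Or.inl (Or.inl (hxa ▸ left_mem_segment ℝ a b))
      rcases eq_or_lt_of_le hα with hα0 | hαpos
      · -- x = z ∈ segment b c
        have hxz' : x = z := by
          rw [← hxval, ← hα0]
          have : β = 1 := by linarith
          simp [this]
        rw [hEdef]
        exact Or.inl (Or.inr (hxz' ▸ ⟨s, t, hs, ht, hst, hzval⟩))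
      rcases eq_or_lt_of_le hs with hs0 | hspos
      · -- z = c, x ∈ segment a c
        have hzc : z = c := by
          rw [← hzval, ← hs0]
          have : t = 1 := by linarith
          simp [this, ← hs0]
        rw [hEdef]
        refine Or.inr ?_
        rw [segment_symm]
        exact ⟨α, β, hα, hβ, hαβ, by rw [← hzc]; exact hxval⟩
      rcases eq_or_lt_of_le ht with ht0 | htpos
      · -- z = b, x ∈ segment a b
        have hzb : z = b := by
          rw [← hzval, ← ht0]
          have : s = 1 := by linarith
          simp [this, ← ht0]
        rw [hEdef]
        exact Or.inl (Or.inl ⟨α, β, hα, hβ, hαβ, by rw [← hzb]; exact hxval⟩)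
      · -- all weights positive: contradiction with interior point
        exfalso
        have hfa : f a ≤ r := hle a (subset_convexHull ℝ _ (by simp))
        have hfb : f b ≤ r := hle b (subset_convexHull ℝ _ (by simp))
        have hfc : f c ≤ r := hle c (subset_convexHull ℝ _ (by simp))
        have hfx : f x = r := rfl
        have hexp : α * f a + β * (s * f b + t * f c) = r := by
          rw [← hfx, ← hxval, map_add, map_smul, map_smul, smul_eq_mul, smul_eq_mul,
            ← hzval, map_add, map_smul, map_smul, smul_eq_mul, smul_eq_mul]
        have h0 : α * (r - f a) + β * s * (r - f b) + β * t * (r - f c) = 0 := by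
          linear_combination (-1 : ℝ) * hexp + r * hαβ + r * β * hst
        have hn1 : 0 ≤ α * (r - f a) := mul_nonneg hα (by linarith)
        have hn2 : 0 ≤ β * s * (r - f b) := mul_nonneg (mul_nonneg hβ hs) (by linarith)
        have hn3 : 0 ≤ β * t * (r - f c) := mul_nonneg (mul_nonneg hβ ht) (by linarith)
        have t1 : α * (r - f a) = 0 := by linarith
        have t2 : β * s * (r - f b) = 0 := by linarith
        have t3 : β * t * (r - f c) = 0 := by linarith
        have hfaeq : f a = r := by
          have := (mul_eq_zero.mp t1).resolve_left (ne_of_gt hαpos); linarith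
        have hfbeq : f b = r := by
          have := (mul_eq_zero.mp t2).resolve_left
            (ne_of_gt (mul_pos hβpos hspos)); linarith
        have hfceq : f c = r := by
          have := (mul_eq_zero.mp t3).resolve_left
            (ne_of_gt (mul_pos hβpos htpos)); linarith
        -- but then f = r on T, contradicting f w < r
        obtain ⟨z', hz', hwz'⟩ := hdecomp w (interior_subset hw)
        obtain ⟨s', t', hs', ht', hst', hz'val⟩ := hz'
        obtain ⟨α', β', hα', hβ', hαβ', hwval⟩ := hwz'
        have hweq : f w = r := by
          rw [← hwval, map_add, map_smul, map_smul, smul_eq_mul, smul_eq_mul, ← hz'val,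
            map_add, map_smul, map_smul, smul_eq_mul, smul_eq_mul, hfaeq, hfbeq, hfceq]
          linear_combination r * hαβ' + r * β' * hst'
        have := hf w hw
        linarith
    -- main argument
    intro x hxT
    by_contra hxP
    have hxE : x ∉ E := fun h => hxP (hEP h)
    have hxI : x ∈ interior T := by
      by_contra h
      exact hxE (key x hxT h)
    have hTcomp : IsCompact T := (Set.toFinite _).isCompact_convexHull (𝕜 := ℝ)
    obtain ⟨y, hy⟩ : ∃ y, y ∉ P ∪ T :=
      Set.ne_univ_iff_exists_notMem _ |>.mp (hP.union hTcomp).ne_univ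
    have hyP : y ∉ P := fun h => hy (Or.inl h)
    have hyT : y ∉ T := fun h => hy (Or.inr h)
    have hcover : Pᶜ ⊆ interior T ∪ Tᶜ := by
      intro p hp
      by_cases hpT : p ∈ T
      · left
        by_contra h
        exact hp (hEP (key p hpT h))
      · exact Or.inr hpT
    have hdisj : interior T ∩ Tᶜ = ∅ := by
      ext p
      simp only [mem_inter_iff, mem_compl_iff, mem_empty_iff_false, iff_false, not_and]
      intro h
      simpa using interior_subset h
    obtain ⟨p, hp⟩ := hconn.isPreconnected (interior T) Tᶜ isOpen_interior
      (hTcomp.isClosed.isOpen_compl) hcover ⟨x, hxP, hxI⟩ ⟨y, hyP, hyT⟩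
    rw [hdisj] at hp
    exact hp.2
end

section
/- Let P be a compact subset of the plane ℝ × ℝ whose complement is connected (a model of a polygon without holes). Let s, t, x ∈ P and suppose the segment joining s and t is contained in P. Then the set {v ∈ segment[s, t] : the segment joining v and x is contained in P} is a convex subset of the plane; in particular, the intersection of the visibility region of x with the straight-line chord [s, t] is empty or a connected chain (chain-visibility of straight lines inside polygons without holes). -/
open Set

private lemma range_triple (a b c : ℝ × ℝ) : Set.range ![a, b, c] = {a, b, c} := by
  ext y
  constructor
  · rintro ⟨i, rfl⟩
    fin_cases i <;> simp
  · intro hy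
    rcases hy with h | h | h
    · exact ⟨0, h.symm⟩
    · exact ⟨1, h.symm⟩
    · exact ⟨2, h.symm⟩

private lemma frontier_tri (a b c : ℝ × ℝ) :
    frontier (convexHull ℝ ({a, b, c} : Set (ℝ × ℝ))) ⊆
      segment ℝ a b ∪ segment ℝ b c ∪ segment ℝ a c := by
  have hfin : ({a, b, c} : Set (ℝ × ℝ)).Finite := by
    exact Set.toFinite _
  have hcl : IsClosed (convexHull ℝ ({a, b, c} : Set (ℝ × ℝ))) :=
    (hfin.isCompact_convexHull (𝕜 := ℝ)).isClosed
  by_cases hcol : Collinear ℝ ({a, b, c} : Set (ℝ × ℝ))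
  · intro y hy
    have hyT : y ∈ convexHull ℝ ({a, b, c} : Set (ℝ × ℝ)) := by
      have h1 := hy.1
      rwa [hcl.closure_eq] at h1
    rcases hcol.wbtw_or_wbtw_or_wbtw with h | h | h
    · refine Or.inr (convexHull_min ?_ (convex_segment a c) hyT)
      intro p hp
      rcases hp with rfl | rfl | rfl
      · exact left_mem_segment ℝ p c
      · exact h.mem_segment
      · exact right_mem_segment ℝ a p
    · refine Or.inl (Or.inl (convexHull_min ?_ (convex_segment a b) hyT))
      intro p hp
      rcases hp with rfl | rfl | rfl
      · exact left_mem_segment ℝ p b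
      · exact right_mem_segment ℝ a p
      · rw [segment_symm]; exact h.mem_segment
    · refine Or.inl (Or.inr (convexHull_min ?_ (convex_segment b c) hyT))
      intro p hp
      rcases hp with rfl | rfl | rfl
      · rw [segment_symm]; exact h.mem_segment
      · exact left_mem_segment ℝ p c
      · exact right_mem_segment ℝ b p
  · have hind : AffineIndependent ℝ ![a, b, c] :=
      affineIndependent_iff_not_collinear_set.mpr hcol
    have hcard : Fintype.card (Fin 3) = Module.finrank ℝ (ℝ × ℝ) + 1 := by
      simp
    have htot : affineSpan ℝ (Set.range ![a, b, c]) = ⊤ :=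
      hind.affineSpan_eq_top_iff_card_eq_finrank_add_one.mpr hcard
    let B : AffineBasis (Fin 3) ℝ (ℝ × ℝ) := ⟨![a, b, c], hind, htot⟩
    have hB : ∀ j, B j = ![a, b, c] j := fun j => rfl
    have hrange : Set.range (B : Fin 3 → ℝ × ℝ) = {a, b, c} := range_triple a b c
    intro y hy
    have hyT : y ∈ convexHull ℝ ({a, b, c} : Set (ℝ × ℝ)) := by
      have h1 := hy.1
      rwa [hcl.closure_eq] at h1
    have hnonneg : ∀ i, 0 ≤ B.coord i y := by
      rw [← hrange] at hyT
      rwa [B.convexHull_eq_nonneg_coord] at hyT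
    have hnotint : y ∉ interior (convexHull ℝ (Set.range (B : Fin 3 → ℝ × ℝ))) := by
      rw [hrange]; exact hy.2
    rw [B.interior_convexHull] at hnotint
    have hnotint' : ¬ ∀ i, 0 < B.coord i y := hnotint
    push_neg at hnotint'
    obtain ⟨i, hi⟩ := hnotint' 
    have hzero : B.coord i y = 0 := le_antisymm hi (hnonneg i)
    have hsum : ∑ j, B.coord j y = 1 := B.sum_coord_apply_eq_one y
    have hrep : y = ∑ j, B.coord j y • (B j) := by
      conv_lhs => rw [← B.affineCombination_coord_eq_self y]
      rw [Finset.affineCombination_eq_linear_combination _ _ _ hsum]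
    rw [Fin.sum_univ_three] at hrep hsum
    simp only [hB, Matrix.cons_val_zero, Matrix.cons_val_one, Matrix.head_cons,
      Matrix.cons_val_two, Matrix.tail_cons] at hrep
    fin_cases i
    · have h0 : B.coord 0 y = 0 := hzero
      rw [h0, zero_smul, zero_add] at hrep
      exact Or.inl (Or.inr ⟨B.coord 1 y, B.coord 2 y, hnonneg 1, hnonneg 2,
        by linarith [hsum, h0], hrep.symm⟩)
    · have h1 : B.coord 1 y = 0 := hzero
      rw [h1, zero_smul, add_zero] at hrep
      exact Or.inr ⟨B.coord 0 y, B.coord 2 y, hnonneg 0, hnonneg 2,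
        by linarith [hsum, h1], hrep.symm⟩
    · have h2 : B.coord 2 y = 0 := hzero
      rw [h2, zero_smul, add_zero] at hrep
      exact Or.inl (Or.inl ⟨B.coord 0 y, B.coord 1 y, hnonneg 0, hnonneg 1,
        by linarith [hsum, h2], hrep.symm⟩)

private lemma tri_subset (P : Set (ℝ × ℝ)) (hP : IsCompact P) (hconn : IsConnected Pᶜ)
    (a b c : ℝ × ℝ) (h1 : segment ℝ a b ⊆ P) (h2 : segment ℝ b c ⊆ P)
    (h3 : segment ℝ a c ⊆ P) : convexHull ℝ ({a, b, c} : Set (ℝ × ℝ)) ⊆ P := by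
  set T := convexHull ℝ ({a, b, c} : Set (ℝ × ℝ)) with hTdef
  have hTc : IsCompact T := by
    apply Set.Finite.isCompact_convexHull
    exact Set.toFinite _
  have hfr : frontier T ⊆ P := by
    intro y hy
    rcases frontier_tri a b c hy with (h | h) | h
    exacts [h1 h, h2 h, h3 h]
  intro y hyT
  by_contra hyP
  obtain ⟨r, hr⟩ := (hP.union hTc).isBounded.subset_closedBall 0
  set z : ℝ × ℝ := (r + 1, 0) with hzdef
  have hz : z ∉ P ∪ T := by
    intro hzin
    have h1' := hr hzin
    rw [Metric.mem_closedBall, dist_zero_right] at h1'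
    have h2' : r + 1 ≤ ‖z‖ := by
      calc r + 1 ≤ |r + 1| := le_abs_self _
        _ = ‖(r + 1 : ℝ)‖ := (Real.norm_eq_abs _).symm
        _ = ‖z.1‖ := rfl
        _ ≤ ‖z‖ := norm_fst_le z
    linarith
  have hdisj : Disjoint (interior T) (closure T)ᶜ :=
    disjoint_compl_right.mono interior_subset_closure le_rfl
  have hsub : Pᶜ ⊆ interior T ∪ (closure T)ᶜ := by
    intro w hw
    by_cases hwc : w ∈ closure T
    · left
      by_contra hwi
      exact hw (hfr ⟨hwc, hwi⟩)
    · exact Or.inr hwc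
  rcases hconn.isPreconnected.subset_or_subset isOpen_interior
      isClosed_closure.isOpen_compl hdisj hsub with h | h
  · have : z ∈ Pᶜ := fun hzP => hz (Or.inl hzP)
    exact hz (Or.inr (interior_subset (h this)))
  · exact (h hyP) (subset_closure hyT)

/-- Chain-visibility of straight chords inside polygons without holes: for a compact
`P ⊆ ℝ × ℝ` with connected complement, points `s, t, x ∈ P` with the segment `[s, t]`
contained in `P`, the set of points `v` of the segment `[s, t]` from which `x` is
visible (i.e. `segment v x ⊆ P`) is a convex subset of the plane; in particular the
intersection of the visibility region of `x` with the chord is empty or a connected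
chain. -/
theorem stmt16 (P : Set (ℝ × ℝ)) (hP : IsCompact P) (hconn : IsConnected Pᶜ)
    (s t x : ℝ × ℝ) (hs : s ∈ P) (ht : t ∈ P) (hx : x ∈ P)
    (hst : segment ℝ s t ⊆ P) :
    Convex ℝ {v ∈ segment ℝ s t | segment ℝ v x ⊆ P} := by
  intro a ha b hb ua ub hua hub hsum
  obtain ⟨ha1, ha2⟩ := ha
  obtain ⟨hb1, hb2⟩ := hb
  have hab : segment ℝ a b ⊆ segment ℝ s t :=
    (convex_segment s t).segment_subset ha1 hb1
  have htri : convexHull ℝ ({a, b, x} : Set (ℝ × ℝ)) ⊆ P :=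
    tri_subset P hP hconn a b x (hab.trans hst) hb2 ha2
  have hconv := convex_convexHull ℝ ({a, b, x} : Set (ℝ × ℝ))
  have hahull : a ∈ convexHull ℝ ({a, b, x} : Set (ℝ × ℝ)) :=
    subset_convexHull ℝ _ (by simp)
  have hbhull : b ∈ convexHull ℝ ({a, b, x} : Set (ℝ × ℝ)) :=
    subset_convexHull ℝ _ (by simp)
  have hxhull : x ∈ convexHull ℝ ({a, b, x} : Set (ℝ × ℝ)) :=
    subset_convexHull ℝ _ (by simp)
  have hvhull : ua • a + ub • b ∈ convexHull ℝ ({a, b, x} : Set (ℝ × ℝ)) :=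
    hconv hahull hbhull hua hub hsum
  exact ⟨(convex_segment s t) ha1 hb1 hua hub hsum,
    (hconv.segment_subset hvhull hxhull).trans htri⟩
end

section
/- Let V be a finite set with at least two elements and let σ be a permutation of V that is a single cycle through all of V (for all u, v ∈ V there exists n ≥ 0 with σ^n(u) = v). Let S, F ⊆ V be disjoint nonempty subsets such that σ(f) ∈ S for every f ∈ F and σ⁻¹(s) ∈ F for every s ∈ S. Then |S| = |F|, and for every s ∈ S, letting k be the least positive integer with σ^k(s) ∈ S ∪ F, we have σ^k(s) ∈ F. (Hence the cycle decomposes into |S| arcs, each beginning at an element of S, ending at an element of F, and containing no other element of S ∪ F; this is the decomposition of an optimal TSP tour on the Noon–Bean-transformed graph into one start-depot-to-finish-depot subtour per robot.) -/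
/-- Decomposition of a TSP tour on the Noon–Bean-transformed graph into depot-to-depot
subtours: let `σ` be a single cycle through a finite vertex set `V` with at least two
elements, and let `S` (start depots) and `F` (finish depots) be disjoint nonempty
subsets such that `σ` maps `F` into `S` and `σ⁻¹` maps `S` into `F`.  Then `|S| = |F|`,
and for every `s ∈ S` the first return of the cycle from `s` to `S ∪ F` lands in `F`:
there is a least positive `k` with `σ^k s ∈ S ∪ F`, and `σ^k s ∈ F`. -/
theorem stmt17 {V : Type*} [Fintype V] [DecidableEq V] (h2 : 2 ≤ Fintype.card V)
    (σ : Equiv.Perm V) (hcyc : ∀ u v : V, ∃ n : ℕ, (σ ^ n) u = v)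
    (S F : Finset V) (hdisj : Disjoint S F) (hS : S.Nonempty) (hF : F.Nonempty)
    (hFS : ∀ f ∈ F, σ f ∈ S) (hSF : ∀ s ∈ S, σ⁻¹ s ∈ F) :
    S.card = F.card ∧
      ∀ s ∈ S, ∃ k : ℕ, 0 < k ∧ (σ ^ k) s ∈ F ∧
        ∀ j : ℕ, 0 < j → j < k → (σ ^ j) s ∉ S ∪ F := by
  constructor
  · apply le_antisymm
    · have h1 : S.image (σ⁻¹ : Equiv.Perm V) ⊆ F := by
        intro x hx
        obtain ⟨y, hy, rfl⟩ := Finset.mem_image.mp hx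
        exact hSF y hy
      calc S.card = (S.image (σ⁻¹ : Equiv.Perm V)).card :=
            (Finset.card_image_of_injective _ (Equiv.injective _)).symm
        _ ≤ F.card := Finset.card_le_card h1
    · have h1 : F.image (σ : Equiv.Perm V) ⊆ S := by
        intro x hx
        obtain ⟨y, hy, rfl⟩ := Finset.mem_image.mp hx
        exact hFS y hy
      calc F.card = (F.image (σ : Equiv.Perm V)).card :=
            (Finset.card_image_of_injective _ (Equiv.injective _)).symm
        _ ≤ S.card := Finset.card_le_card h1
  · intro s hs
    have hsF : s ∉ F := fun h => (Finset.disjoint_left.mp hdisj hs) h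
    obtain ⟨f, hf⟩ := hF
    obtain ⟨n, hn⟩ := hcyc s f
    have hP : ∃ k : ℕ, 0 < k ∧ (σ ^ k) s ∈ S ∪ F := by
      refine ⟨n, ?_, by rw [hn]; exact Finset.mem_union_right _ hf⟩
      rcases Nat.eq_zero_or_pos n with rfl | h
      · simp only [pow_zero, Equiv.Perm.coe_one, id_eq] at hn
        exact absurd (hn ▸ hf) hsF
      · exact h
    classical
    set k := Nat.find hP with hkdef
    obtain ⟨hk0, hkmem⟩ := Nat.find_spec hP
    have hmin : ∀ j, 0 < j → j < k → (σ ^ j) s ∉ S ∪ F := by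
      intro j hj0 hjk hmem
      exact Nat.find_min hP hjk ⟨hj0, hmem⟩
    refine ⟨k, hk0, ?_, hmin⟩
    rcases Finset.mem_union.mp hkmem with hkS | hkF
    · exfalso
      have hpred : σ⁻¹ ((σ ^ k) s) = (σ ^ (k - 1)) s := by
        have hm : k - 1 + 1 = k := Nat.succ_pred_eq_of_pos hk0
        rw [← hm, pow_succ']
        simp
      have hFmem : (σ ^ (k - 1)) s ∈ F := hpred ▸ hSF _ hkS
      rcases Nat.eq_zero_or_pos (k - 1) with h0 | hpos
      · rw [h0] at hFmem
        simp at hFmem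
        exact hsF hFmem
      · exact hmin (k - 1) hpos (Nat.pred_lt hk0.ne') (Finset.mem_union_right _ hFmem)
    · exact hkF
end

section
/- For every real c > 0 there exist a finite nonempty family of targets X with nonempty closed intervals C x = [a x, b x] ⊆ ℝ, a measurement time t_m > 0, a feasible collection of 2 paths of cost c₀ > 0, and a set G* ⊆ ℝ of minimum cardinality seeing every target, such that for every partition of G* into two nonempty parts V_1 and V_2, max(cost V_1, cost V_2) > c · c₀. (First computing a minimum set of discrete viewpoints and then splitting it into two paths can be arbitrarily worse than the optimal two-path solution.) -/
lemma key18 (M : ℝ) (hM : 0 < M) (V : Finset ℝ)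
    (hV : V ⊆ ({0, M, 2*M+1} : Finset ℝ)) (h2 : 2 ≤ V.card) (hne : V.Nonempty) :
    M ≤ V.max' hne - V.min' hne := by
  obtain ⟨u, hu, w, hw, huw⟩ := Finset.one_lt_card.1 (by omega : 1 < V.card)
  have hu' : u = 0 ∨ u = M ∨ u = 2*M+1 := by simpa using hV hu
  have hw' : w = 0 ∨ w = M ∨ w = 2*M+1 := by simpa using hV hw
  have h1 : V.min' hne ≤ u := V.min'_le u hu
  have h2 : V.min' hne ≤ w := V.min'_le w hw
  have h3 : u ≤ V.max' hne := V.le_max' u hu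
  have h4 : w ≤ V.max' hne := V.le_max' w hw
  rcases hu' with rfl | rfl | rfl <;> rcases hw' with rfl | rfl | rfl <;>
    first | (exact absurd rfl huw) | linarith

/-- First computing a minimum set of discrete viewpoints and then splitting it into two
paths can be arbitrarily worse than the optimal two-path solution: for every `c > 0`
there are a finite nonempty family of targets with visibility intervals `[a x, b x]`, a
measurement time `tm > 0`, a feasible collection of two paths of cost `c₀ > 0` (cost of
a path `V` is `(max V − min V) + |V| * tm`, cost of the collection is the max of the two
path costs), and a minimum-cardinality set `G` seeing every target, such that every
partition of `G` into two nonempty parts `V₁, V₂` satisfies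
`max (cost V₁) (cost V₂) > c * c₀`. -/
theorem stmt18 (c : ℝ) (hc : 0 < c) :
    ∃ (X : Type) (_ : Fintype X) (_ : Nonempty X) (a b : X → ℝ) (_ : ∀ x, a x ≤ b x)
      (tm : ℝ) (_ : 0 < tm) (P : Fin 2 → Finset ℝ) (hP : ∀ i, (P i).Nonempty)
      (c0 : ℝ),
      0 < c0 ∧
      (∀ x : X, ∃ i, ∃ v ∈ P i, a x ≤ v ∧ v ≤ b x) ∧
      c0 = max ((P 0).max' (hP 0) - (P 0).min' (hP 0) + (P 0).card * tm)
              ((P 1).max' (hP 1) - (P 1).min' (hP 1) + (P 1).card * tm) ∧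
      ∃ G : Finset ℝ,
        (∀ x : X, ∃ v ∈ G, a x ≤ v ∧ v ≤ b x) ∧
        (∀ S : Finset ℝ, (∀ x : X, ∃ v ∈ S, a x ≤ v ∧ v ≤ b x) → G.card ≤ S.card) ∧
        ∀ V₁ V₂ : Finset ℝ, Disjoint V₁ V₂ → V₁ ∪ V₂ = G →
          ∀ (h₁ : V₁.Nonempty) (h₂ : V₂.Nonempty),
            c * c0 < max (V₁.max' h₁ - V₁.min' h₁ + V₁.card * tm)
                        (V₂.max' h₂ - V₂.min' h₂ + V₂.card * tm) := by
  obtain ⟨M, hM, hMc⟩ : ∃ M : ℝ, 0 < M ∧ 3*c < M := ⟨3*c+1, by linarith, by linarith⟩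
  refine ⟨Fin 3, inferInstance, inferInstance,
    ![0, M, 2*M+1], ![0, 2*M, 2*M+1], ?_, 1, one_pos,
    ![{0}, {2*M, 2*M+1}], ?_, 3, by norm_num, ?_, ?_, ?_⟩
  · intro x; fin_cases x <;> simp <;> linarith
  · intro i; fin_cases i <;> simp
  · -- feasibility
    intro x
    fin_cases x
    · exact ⟨0, 0, by simp, by simp⟩
    · exact ⟨1, 2*M, by simp, by simp; linarith⟩
    · exact ⟨1, 2*M+1, by simp, by simp⟩
  · -- cost computation
    have h1 : (2:ℝ)*M ≠ 2*M+1 := by linarith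
    simp [Finset.max'_insert, Finset.min'_insert, Finset.card_insert_of_notMem, h1]; norm_num
  · refine ⟨{0, M, 2*M+1}, ?_, ?_, ?_⟩
    · intro x
      fin_cases x
      · exact ⟨0, by simp, by simp⟩
      · exact ⟨M, by simp, by simp; linarith⟩
      · exact ⟨2*M+1, by simp, by simp⟩
    · -- minimality
      intro S hS
      obtain ⟨v0, hv0, h01, h02⟩ := hS 0
      obtain ⟨v1, hv1, h11, h12⟩ := hS 1
      obtain ⟨v2, hv2, h21, h22⟩ := hS 2
      simp at h01 h02 h11 h12 h21 h22
      have e0 : v0 = 0 := le_antisymm h02 h01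
      have e2 : v2 = 2*M+1 := le_antisymm h22 h21
      have hsub : ({0, v1, 2*M+1} : Finset ℝ) ⊆ S := by
        intro y hy; simp at hy
        rcases hy with rfl | rfl | rfl
        · exact e0 ▸ hv0
        · exact hv1
        · exact e2 ▸ hv2
      have hcard : ({0, v1, 2*M+1} : Finset ℝ).card = 3 := by
        rw [Finset.card_insert_of_notMem (by simp; constructor <;> intro h <;> linarith),
            Finset.card_insert_of_notMem (by simp; intro h; linarith),
            Finset.card_singleton]
      have hG : ({0, M, 2*M+1} : Finset ℝ).card = 3 := by
        rw [Finset.card_insert_of_notMem (by simp; constructor <;> intro h <;> linarith),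
            Finset.card_insert_of_notMem (by simp; intro h; linarith),
            Finset.card_singleton]
      calc ({0, M, 2*M+1} : Finset ℝ).card = 3 := hG
        _ = ({0, v1, 2*M+1} : Finset ℝ).card := hcard.symm
        _ ≤ S.card := Finset.card_le_card hsub
    · -- partition
      intro V₁ V₂ hdis hun h₁ h₂
      have hG : ({0, M, 2*M+1} : Finset ℝ).card = 3 := by
        rw [Finset.card_insert_of_notMem (by simp; constructor <;> intro h <;> linarith),
            Finset.card_insert_of_notMem (by simp; intro h; linarith),
            Finset.card_singleton]
      have hsum : V₁.card + V₂.card = 3 := by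
        rw [← Finset.card_union_of_disjoint hdis, hun, hG]
      have hs1 : V₁ ⊆ ({0, M, 2*M+1} : Finset ℝ) := hun ▸ Finset.subset_union_left
      have hs2 : V₂ ⊆ ({0, M, 2*M+1} : Finset ℝ) := hun ▸ Finset.subset_union_right
      have key : ∀ (V : Finset ℝ) (hV : V ⊆ ({0, M, 2*M+1} : Finset ℝ))
          (h2 : 2 ≤ V.card) (hne : V.Nonempty),
          c * 3 < V.max' hne - V.min' hne + V.card * 1 := by
        intro V hV hc2 hne
        have := key18 M hM V hV hc2 hne
        have : (2:ℝ) ≤ (V.card : ℝ) := by exact_mod_cast hc2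
        have := key18 M hM V hV hc2 hne
        linarith
      rcases le_or_gt 2 V₁.card with h | h
      · exact lt_max_iff.mpr (Or.inl (key V₁ hs1 h h₁))
      · have : 2 ≤ V₂.card := by
          have := Finset.card_pos.mpr h₁; omega
        exact lt_max_iff.mpr (Or.inr (key V₂ hs2 this h₂))
end
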